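/- arXiv:1909.04982 — 9 statements merged into one kernel-verified Lean document; each statement's English description precedes it below -/
import Mathlib

section
/- Every positive integer n with n ≡ 4 (mod 5) that can be written as a sum of three squares of integers can also be written as a sum of three nonunit squares, except for n = 14 and n = 19. That is, if n ≡ 4 (mod 5), n = a² + b² + c² for some integers a, b, c, and n ∉ {14, 19}, then there exist integers x, y, z with n = x² + y² + z² and x² ≠ 1, y² ≠ 1, z² ≠ 1. -/
lemma sq_cast_zmod5 (b : ℤ) : ((b ^ 2 : ℤ) : ZMod 5) = ((b : ZMod 5)) ^ 2 := by
  push_cast; ring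

lemma ne_one_of_res (b : ℤ) (r : ZMod 5) (hb : ((b : ZMod 5)) ^ 2 = r) (hr : r ≠ 1) :
    b ^ 2 ≠ 1 := by
  intro h
  apply hr
  rw [← hb, ← sq_cast_zmod5, h]
  norm_num

/-- Key rotation lemma. -/
lemma key (b : ℤ) (hb5 : ((b : ZMod 5)) ^ 2 = 4) (hb4 : b ^ 2 ≠ 4) (hb9 : b ^ 2 ≠ 9) :
    ∃ x y : ℤ, 1 + b ^ 2 = x ^ 2 + y ^ 2 ∧ x ^ 2 ≠ 1 ∧ y ^ 2 ≠ 1 := by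
  set b' : ℤ := if (b : ZMod 5) = 3 then b else -b with hb'def
  have hbb : b' ^ 2 = b ^ 2 := by
    rw [hb'def]; split_ifs <;> ring
  have h3 : ((b' : ZMod 5)) = 3 := by
    rw [hb'def]
    have h23 : (b : ZMod 5) = 2 ∨ (b : ZMod 5) = 3 := by
      have : ∀ x : ZMod 5, x ^ 2 = 4 → x = 2 ∨ x = 3 := by decide
      exact this _ hb5
    split_ifs with h
    · exact h
    · push_cast
      rcases h23 with h2 | h2
      · rw [h2]; decide
      · exact absurd h2 h
  have hdvd : (5 : ℤ) ∣ b' - 3 := by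
    have : ((b' - 3 : ℤ) : ZMod 5) = 0 := by push_cast [h3]; ring
    exact (ZMod.intCast_zmod_eq_zero_iff_dvd _ 5).mp this
  obtain ⟨k, hk⟩ := hdvd
  have hb' : b' = 5 * k + 3 := by linarith
  refine ⟨4 * k + 3, 3 * k + 1, ?_, ?_, ?_⟩
  · rw [← hbb, hb']; ring
  · intro h
    have h8 : 8 * ((2 * k + 1) * (k + 1)) = 0 := by linear_combination h
    have h0 : (2 * k + 1) * (k + 1) = 0 := by
      rcases mul_eq_zero.mp h8 with h' | h'
      · norm_num at h'
      · exact h'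
    rcases mul_eq_zero.mp h0 with h' | h'
    · omega
    · have : k = -1 := by linarith
      apply hb4
      rw [← hbb, hb', this]; ring
  · intro h
    have h3' : 3 * (k * (3 * k + 2)) = 0 := by linear_combination h
    have h0 : k * (3 * k + 2) = 0 := by
      rcases mul_eq_zero.mp h3' with h' | h'
      · norm_num at h'
      · exact h'
    rcases mul_eq_zero.mp h0 with h' | h'
    · apply hb9
      rw [← hbb, hb', h']; ring
    · omega

/-- The case where one square is ≡ 1 and the other two are ≡ 4 mod 5. -/
lemma main_case (n : ℕ) (a b c : ℤ) (h : (n : ℤ) = a ^ 2 + b ^ 2 + c ^ 2)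
    (ha : ((a : ZMod 5)) ^ 2 = 1) (hb : ((b : ZMod 5)) ^ 2 = 4)
    (hc : ((c : ZMod 5)) ^ 2 = 4) (h14 : n ≠ 14) (h19 : n ≠ 19) :
    ∃ x y z : ℤ, (n : ℤ) = x ^ 2 + y ^ 2 + z ^ 2 ∧
      x ^ 2 ≠ 1 ∧ y ^ 2 ≠ 1 ∧ z ^ 2 ≠ 1 := by
  have hbne : b ^ 2 ≠ 1 := ne_one_of_res b 4 hb (by decide)
  have hcne : c ^ 2 ≠ 1 := ne_one_of_res c 4 hc (by decide)
  by_cases ha1 : a ^ 2 = 1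
  · -- n = 1 + b² + c²
    have hn1 : (n : ℤ) = 1 + b ^ 2 + c ^ 2 := by rw [h, ha1]
    by_cases hb49 : b ^ 2 ≠ 4 ∧ b ^ 2 ≠ 9
    · obtain ⟨x, y, hxy, hx, hy⟩ := key b hb hb49.1 hb49.2
      exact ⟨x, y, c, by rw [hn1]; linarith, hx, hy, hcne⟩
    · by_cases hc49 : c ^ 2 ≠ 4 ∧ c ^ 2 ≠ 9
      · obtain ⟨x, y, hxy, hx, hy⟩ := key c hc hc49.1 hc49.2
        exact ⟨x, y, b, by rw [hn1]; linarith, hx, hy, hbne⟩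
      · -- both b², c² ∈ {4, 9}, so n ∈ {9, 14, 19}
        push_neg at hb49 hc49
        have hb2 : b ^ 2 = 4 ∨ b ^ 2 = 9 := by tauto
        have hc2 : c ^ 2 = 4 ∨ c ^ 2 = 9 := by tauto
        have hn9 : (n : ℤ) = 9 ∨ (n : ℤ) = 14 ∨ (n : ℤ) = 19 := by
          rcases hb2 with h' | h' <;> rcases hc2 with h'' | h'' <;>
            rw [hn1, h', h''] <;> norm_num
        have hnint : (n : ℤ) = 9 := by
          rcases hn9 with h' | h' | h'
          · exact h'
          · exfalso; apply h14; exact_mod_cast h'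
          · exfalso; apply h19; exact_mod_cast h'
        exact ⟨3, 0, 0, by rw [hnint]; norm_num, by norm_num, by norm_num, by norm_num⟩
  · exact ⟨a, b, c, h, ha1, hbne, hcne⟩

/-- Any `n ∈ 𝒮₃` with `n ≡ 4 (mod 5)` is a sum of three nonunit squares, except `14`, `19`. -/
theorem stmt_1 (n : ℕ) (hn : 0 < n) (h5 : n % 5 = 4)
    (hS3 : ∃ a b c : ℤ, (n : ℤ) = a ^ 2 + b ^ 2 + c ^ 2)
    (h14 : n ≠ 14) (h19 : n ≠ 19) :
    ∃ x y z : ℤ, (n : ℤ) = x ^ 2 + y ^ 2 + z ^ 2 ∧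
      x ^ 2 ≠ 1 ∧ y ^ 2 ≠ 1 ∧ z ^ 2 ≠ 1 := by
  obtain ⟨a, b, c, h⟩ := hS3
  have hn5 : ((n : ℕ) : ZMod 5) = 4 := by
    rw [← ZMod.natCast_mod n 5, h5]
    rfl
  have hsum : ((a : ZMod 5)) ^ 2 + ((b : ZMod 5)) ^ 2 + ((c : ZMod 5)) ^ 2 = 4 := by
    have : (((n : ℤ)) : ZMod 5) = 4 := by exact_mod_cast hn5
    rw [h] at this
    push_cast at this
    exact this
  have hcases : ∀ α β γ : ZMod 5, α ^ 2 + β ^ 2 + γ ^ 2 = 4 →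
      (α ^ 2 ≠ 1 ∧ β ^ 2 ≠ 1 ∧ γ ^ 2 ≠ 1) ∨
      (α ^ 2 = 1 ∧ β ^ 2 = 4 ∧ γ ^ 2 = 4) ∨
      (β ^ 2 = 1 ∧ α ^ 2 = 4 ∧ γ ^ 2 = 4) ∨
      (γ ^ 2 = 1 ∧ α ^ 2 = 4 ∧ β ^ 2 = 4) := by decide
  rcases hcases _ _ _ hsum with ⟨h1, h2, h3⟩ | ⟨h1, h2, h3⟩ | ⟨h1, h2, h3⟩ | ⟨h1, h2, h3⟩
  · exact ⟨a, b, c, h, fun hh => h1 (by rw [← sq_cast_zmod5, hh]; norm_num),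
      fun hh => h2 (by rw [← sq_cast_zmod5, hh]; norm_num),
      fun hh => h3 (by rw [← sq_cast_zmod5, hh]; norm_num)⟩
  · exact main_case n a b c h h1 h2 h3 h14 h19
  · obtain ⟨x, y, z, hxyz, hx, hy, hz⟩ :=
      main_case n b a c (by rw [h]; ring) h1 h2 h3 h14 h19
    exact ⟨x, y, z, hxyz, hx, hy, hz⟩
  · obtain ⟨x, y, z, hxyz, hx, hy, hz⟩ :=
      main_case n c a b (by rw [h]; ring) h1 h2 h3 h14 h19
    exact ⟨x, y, z, hxyz, hx, hy, hz⟩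
end

section
/- Let x be an integer with x ≡ 2 (mod 5) or x ≡ 3 (mod 5). If x ∉ {2, −2, 3, −3}, then x² + 1 can be written as a sum of two nonunit squares, i.e., there exist integers u, v with x² + 1 = u² + v², u² ≠ 1, and v² ≠ 1. -/
/-- If `x ≡ ±2 (mod 5)` and `x ∉ {2, −2, 3, −3}`, then `x² + 1` is a sum of two
nonunit squares. -/
theorem stmt_2 (x : ℤ) (h5 : x % 5 = 2 ∨ x % 5 = 3)
    (hx : x ∉ ({2, -2, 3, -3} : Set ℤ)) :
    ∃ u v : ℤ, x ^ 2 + 1 = u ^ 2 + v ^ 2 ∧ u ^ 2 ≠ 1 ∧ v ^ 2 ≠ 1 := by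
  simp only [Set.mem_insert_iff, Set.mem_singleton_iff, not_or] at hx
  obtain ⟨hx1, hx2, hx3, hx4⟩ := hx
  rcases h5 with h5 | h5
  · obtain ⟨k, hk⟩ : ∃ k, x = 5 * k + 2 := ⟨x / 5, by omega⟩
    refine ⟨4 * k + 1, 3 * k + 2, by rw [hk]; ring, ?_, ?_⟩
    · intro h
      have h0 : (4 * k) * (4 * k + 2) = 0 := by nlinarith
      rcases mul_eq_zero.mp h0 with h1 | h1 <;> omega
    · intro h
      have h0 : (3 * k + 1) * (3 * k + 3) = 0 := by nlinarith
      rcases mul_eq_zero.mp h0 with h1 | h1 <;> omega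
  · obtain ⟨k, hk⟩ : ∃ k, x = 5 * k + 3 := ⟨x / 5, by omega⟩
    refine ⟨4 * k + 3, 3 * k + 1, by rw [hk]; ring, ?_, ?_⟩
    · intro h
      have h0 : (4 * k + 2) * (4 * k + 4) = 0 := by nlinarith
      rcases mul_eq_zero.mp h0 with h1 | h1 <;> omega
    · intro h
      have h0 : (3 * k) * (3 * k + 2) = 0 := by nlinarith
      rcases mul_eq_zero.mp h0 with h1 | h1 <;> omega
end

section
/- For positive integers n and y, the following hold: (i) 5ⁿ = 1 + y² if and only if (n, y) = (1, 2); (ii) 5ⁿ = 4 + y² if and only if (n, y) = (1, 1) or (3, 11); (iii) 5ⁿ = 9 + y² if and only if (n, y) = (2, 4); (iv) 2·5ⁿ = 1 + y² if and only if (n, y) = (1, 3) or (2, 7); (v) 2·5ⁿ = 4 + y² has no solutions; (vi) 2·5ⁿ = 9 + y² if and only if (n, y) = (1, 1) or (5, 79). -/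
open Zsqrtd Finset

abbrev GI := GaussianInt

def zt : GI := ⟨2, 1⟩
def ii : GI := ⟨1, 1⟩

lemma pow_val {a b : ℤ} {n : ℕ} (h : zt ^ n = ⟨a, b⟩) :
    zt ^ (n + 1) = ⟨2 * a - b, a + 2 * b⟩ := by
  rw [pow_succ, h]
  refine Zsqrtd.ext ?_ ?_ <;> simp [zt, Zsqrtd.re_mul, Zsqrtd.im_mul] <;> ring
lemma zv0 : zt ^ 0 = ⟨1, 0⟩ := by norm_num [Zsqrtd.ext_iff]

lemma zv1 : zt ^ 1 = ⟨2, 1⟩ := by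
  have h := pow_val zv0; norm_num [Zsqrtd.ext_iff] at h ⊢; exact h

lemma zv2 : zt ^ 2 = ⟨3, 4⟩ := by
  have h := pow_val zv1; norm_num [Zsqrtd.ext_iff] at h ⊢; exact h

lemma zv3 : zt ^ 3 = ⟨2, 11⟩ := by
  have h := pow_val zv2; norm_num [Zsqrtd.ext_iff] at h ⊢; exact h

lemma zv4 : zt ^ 4 = ⟨-7, 24⟩ := by
  have h := pow_val zv3; norm_num [Zsqrtd.ext_iff] at h ⊢; exact h

lemma zv5 : zt ^ 5 = ⟨-38, 41⟩ := by
  have h := pow_val zv4; norm_num [Zsqrtd.ext_iff] at h ⊢; exact h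

lemma zv6 : zt ^ 6 = ⟨-117, 44⟩ := by
  have h := pow_val zv5; norm_num [Zsqrtd.ext_iff] at h ⊢; exact h

lemma zv7 : zt ^ 7 = ⟨-278, -29⟩ := by
  have h := pow_val zv6; norm_num [Zsqrtd.ext_iff] at h ⊢; exact h

lemma zv8 : zt ^ 8 = ⟨-527, -336⟩ := by
  have h := pow_val zv7; norm_num [Zsqrtd.ext_iff] at h ⊢; exact h

lemma zv9 : zt ^ 9 = ⟨-718, -1199⟩ := by
  have h := pow_val zv8; norm_num [Zsqrtd.ext_iff] at h ⊢; exact h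

lemma zv10 : zt ^ 10 = ⟨-237, -3116⟩ := by
  have h := pow_val zv9; norm_num [Zsqrtd.ext_iff] at h ⊢; exact h

lemma zv11 : zt ^ 11 = ⟨2642, -6469⟩ := by
  have h := pow_val zv10; norm_num [Zsqrtd.ext_iff] at h ⊢; exact h

lemma zv12 : zt ^ 12 = ⟨11753, -10296⟩ := by
  have h := pow_val zv11; norm_num [Zsqrtd.ext_iff] at h ⊢; exact h

lemma zv13 : zt ^ 13 = ⟨33802, -8839⟩ := by
  have h := pow_val zv12; norm_num [Zsqrtd.ext_iff] at h ⊢; exact h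

lemma zv14 : zt ^ 14 = ⟨76443, 16124⟩ := by
  have h := pow_val zv13; norm_num [Zsqrtd.ext_iff] at h ⊢; exact h

lemma zv15 : zt ^ 15 = ⟨136762, 108691⟩ := by
  have h := pow_val zv14; norm_num [Zsqrtd.ext_iff] at h ⊢; exact h

lemma zv16 : zt ^ 16 = ⟨164833, 354144⟩ := by
  have h := pow_val zv15; norm_num [Zsqrtd.ext_iff] at h ⊢; exact h

lemma wv0 : ii * zt ^ 0 = ⟨1, 1⟩ := by
  rw [zv0]; refine Zsqrtd.ext ?_ ?_ <;> simp [ii, Zsqrtd.re_mul, Zsqrtd.im_mul]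

lemma wv1 : ii * zt ^ 1 = ⟨1, 3⟩ := by
  rw [zv1]; refine Zsqrtd.ext ?_ ?_ <;> simp [ii, Zsqrtd.re_mul, Zsqrtd.im_mul]

lemma wv2 : ii * zt ^ 2 = ⟨-1, 7⟩ := by
  rw [zv2]; refine Zsqrtd.ext ?_ ?_ <;> simp [ii, Zsqrtd.re_mul, Zsqrtd.im_mul]

lemma wv3 : ii * zt ^ 3 = ⟨-9, 13⟩ := by
  rw [zv3]; refine Zsqrtd.ext ?_ ?_ <;> simp [ii, Zsqrtd.re_mul, Zsqrtd.im_mul]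

lemma wv4 : ii * zt ^ 4 = ⟨-31, 17⟩ := by
  rw [zv4]; refine Zsqrtd.ext ?_ ?_ <;> simp [ii, Zsqrtd.re_mul, Zsqrtd.im_mul]

lemma wv5 : ii * zt ^ 5 = ⟨-79, 3⟩ := by
  rw [zv5]; refine Zsqrtd.ext ?_ ?_ <;> simp [ii, Zsqrtd.re_mul, Zsqrtd.im_mul]

lemma wv6 : ii * zt ^ 6 = ⟨-161, -73⟩ := by
  rw [zv6]; refine Zsqrtd.ext ?_ ?_ <;> simp [ii, Zsqrtd.re_mul, Zsqrtd.im_mul]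

lemma wv7 : ii * zt ^ 7 = ⟨-249, -307⟩ := by
  rw [zv7]; refine Zsqrtd.ext ?_ ?_ <;> simp [ii, Zsqrtd.re_mul, Zsqrtd.im_mul]

lemma wv8 : ii * zt ^ 8 = ⟨-191, -863⟩ := by
  rw [zv8]; refine Zsqrtd.ext ?_ ?_ <;> simp [ii, Zsqrtd.re_mul, Zsqrtd.im_mul]

lemma wv9 : ii * zt ^ 9 = ⟨481, -1917⟩ := by
  rw [zv9]; refine Zsqrtd.ext ?_ ?_ <;> simp [ii, Zsqrtd.re_mul, Zsqrtd.im_mul]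

lemma wv10 : ii * zt ^ 10 = ⟨2879, -3353⟩ := by
  rw [zv10]; refine Zsqrtd.ext ?_ ?_ <;> simp [ii, Zsqrtd.re_mul, Zsqrtd.im_mul]

lemma wv11 : ii * zt ^ 11 = ⟨9111, -3827⟩ := by
  rw [zv11]; refine Zsqrtd.ext ?_ ?_ <;> simp [ii, Zsqrtd.re_mul, Zsqrtd.im_mul]

lemma wv12 : ii * zt ^ 12 = ⟨22049, 1457⟩ := by
  rw [zv12]; refine Zsqrtd.ext ?_ ?_ <;> simp [ii, Zsqrtd.re_mul, Zsqrtd.im_mul]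

lemma wv13 : ii * zt ^ 13 = ⟨42641, 24963⟩ := by
  rw [zv13]; refine Zsqrtd.ext ?_ ?_ <;> simp [ii, Zsqrtd.re_mul, Zsqrtd.im_mul]

lemma wv14 : ii * zt ^ 14 = ⟨60319, 92567⟩ := by
  rw [zv14]; refine Zsqrtd.ext ?_ ?_ <;> simp [ii, Zsqrtd.re_mul, Zsqrtd.im_mul]

lemma wv15 : ii * zt ^ 15 = ⟨28071, 245453⟩ := by
  rw [zv15]; refine Zsqrtd.ext ?_ ?_ <;> simp [ii, Zsqrtd.re_mul, Zsqrtd.im_mul]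

def imHom : GI →+ ℤ where
  toFun := Zsqrtd.im
  map_zero' := rfl
  map_add' _ _ := rfl

lemma im_sum (s : Finset ℕ) (f : ℕ → GI) : (∑ j ∈ s, f j).im = ∑ j ∈ s, (f j).im :=
  map_sum imHom f s

lemma expand (w x z : GI) (hx : x = 1 + z) (m : ℕ) :
    (w * x ^ m).im
      = w.im + (m : ℤ) * (w * z).im
        + ∑ j ∈ Finset.Ico 2 (m + 1), ((m.choose j : ℤ) * (w * z ^ j).im) := by
  subst hx
  rcases m with _ | m
  · simp
  · have hb : ((1:GI) + z) ^ (m + 1)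
        = ∑ j ∈ Finset.range (m + 2), z ^ j * 1 ^ (m + 1 - j) * ((m+1).choose j : GI) := by
      rw [add_comm (1:GI) z]; exact add_pow z 1 (m+1)
    rw [hb, Finset.mul_sum, im_sum]
    have hterm : ∀ j, (w * (z ^ j * 1 ^ (m + 1 - j) * ((m+1).choose j : GI))).im
        = ((m+1).choose j : ℤ) * (w * z ^ j).im := by
      intro j
      rw [one_pow, mul_one, show (((m+1).choose j : ℕ) : GI) = (((m+1).choose j : ℤ) : GI) by
        push_cast; ring, mul_comm (z ^ j), ← mul_assoc, mul_comm w, mul_assoc]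
      exact Zsqrtd.im_smul _ _
    simp only [hterm]
    rw [Finset.range_eq_Ico,
       ← Finset.sum_Ico_consecutive _ (by omega : 0 ≤ 2) (by omega : 2 ≤ m + 2)]
    have h01 : ∑ j ∈ Finset.Ico 0 2, (((m+1).choose j : ℤ) * (w * z ^ j).im)
        = w.im + ((m:ℤ)+1) * (w * z).im := by
      rw [← Finset.range_eq_Ico]
      rw [Finset.sum_range_succ, Finset.sum_range_one]
      norm_num
    rw [h01]
    push_cast
    ring

lemma zj_im (s : ℕ) (z z' : GI) (hz : z = ((2:ℤ)^s : ℤ) * z') (w : GI) (j : ℕ) :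
    (w * z ^ j).im = 2 ^ (s * j) * (w * z' ^ j).im := by
  have : w * z ^ j = (((2:ℤ) ^ (s * j) : ℤ) : GI) * (w * z' ^ j) := by
    rw [hz, mul_pow, pow_mul]
    push_cast
    ring
  rw [this, Zsqrtd.im_smul]

lemma two_pow_dvd_choose_mul (k : ℕ) (m' : ℕ) (j : ℕ) (hj : 1 ≤ j) :
    2 ^ k ∣ (2 ^ k * m').choose j * j := by
  rcases Nat.exists_eq_succ_of_ne_zero (by omega : j ≠ 0) with ⟨j0, rfl⟩
  rcases Nat.eq_zero_or_pos (2 ^ k * m') with h | h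
  · rw [h]
    rcases Nat.eq_zero_or_pos m' with rfl | hm'
    · simp [Nat.choose_eq_zero_of_lt (by omega : 0 < j0 + 1)]
    · have : 2 ^ k = 0 := by
        rcases Nat.mul_eq_zero.1 h with h' | h'
        · exact h'
        · omega
      simp [this]
  · rcases Nat.exists_eq_succ_of_ne_zero (by omega : 2 ^ k * m' ≠ 0) with ⟨M0, hM⟩
    have key : (M0 + 1) * M0.choose j0 = (M0+1).choose (j0+1) * (j0+1) := by
      simpa using Nat.add_one_mul_choose_eq M0 j0
    refine ⟨m' * M0.choose j0, ?_⟩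
    have : (2 ^ k * m').choose (j0+1) * (j0+1) = (2 ^ k * m') * M0.choose j0 := by
      rw [hM, Nat.succ_eq_add_one]; exact key.symm
    rw [show j0.succ = j0 + 1 from rfl, this]; ring

lemma v2_lt (j : ℕ) (hj : 1 ≤ j) :
    ∃ v j', ¬ 2 ∣ j' ∧ j = 2 ^ v * j' ∧ v < j := by
  obtain ⟨v, j', hj', hjeq⟩ := Nat.exists_eq_pow_mul_and_not_dvd (by omega : j ≠ 0) 2 (by norm_num)
  refine ⟨v, j', hj', hjeq, ?_⟩
  have hj'pos : 0 < j' := by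
    rcases Nat.eq_zero_or_pos j' with rfl | h
    · omega
    · exact h
  have h1 : 2 ^ v ≤ j := by rw [hjeq]; exact Nat.le_mul_of_pos_right _ hj'pos
  have h2 : j < 2 ^ j := Nat.lt_two_pow_self
  exact (Nat.pow_lt_pow_iff_right (by norm_num : 1 < 2)).1 (lt_of_le_of_lt h1 h2)

lemma term_dvd_anchor (s e k m' : ℕ) (hs : 2 ≤ s) (he : e ≤ 2 * (s - 1))
    (z z' : GI) (hz : z = ((2:ℤ)^s : ℤ) * z') (w : GI) (j : ℕ) (hj : 2 ≤ j) :
    ((2:ℤ) ^ (e + k + 1)) ∣ (((2 ^ k * m').choose j : ℤ) * (w * z ^ j).im) := by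
  rw [zj_im s z z' hz w j]
  obtain ⟨v, j', hj', hjeq, hvj⟩ := v2_lt j (by omega)
  by_cases hkv : k ≤ v
  · -- 2^(e+k+1) ∣ 2^(s*j)
    have hle : e + k + 1 ≤ s * j := by
      have h1 : e ≤ j * (s - 1) := le_trans he (by nlinarith)
      have h2 : k + 1 ≤ j := by omega
      nlinarith [Nat.sub_add_cancel (by omega : 1 ≤ s)]
    exact Dvd.dvd.mul_left (dvd_mul_of_dvd_left (pow_dvd_pow (2:ℤ) hle) _) _
  · push_neg at hkv
    -- 2^(k-v) ∣ choose
    have hC : 2 ^ (k - v) ∣ (2 ^ k * m').choose j := by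
      set C := (2 ^ k * m').choose j with hCdef
      have h1 : 2 ^ k ∣ C * j := two_pow_dvd_choose_mul k m' j (by omega)
      rw [hjeq, ← mul_assoc, mul_comm C, mul_assoc] at h1
      have h2 : 2 ^ v * 2 ^ (k - v) ∣ 2 ^ v * (C * j') := by
        rwa [← pow_add, show v + (k - v) = k by omega]
      have h3 : 2 ^ (k - v) ∣ C * j' :=
        (Nat.mul_dvd_mul_iff_left (Nat.pow_pos (n := v) (by norm_num))).1 h2
      exact (Nat.Coprime.pow_left _ ((Nat.prime_two.coprime_iff_not_dvd).2 hj')).dvd_of_dvd_mul_right h3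
    have hle : e + v + 1 ≤ s * j := by
      have h1 : e ≤ j * (s - 1) := le_trans he (by nlinarith)
      have h2 : v + 1 ≤ j := by omega
      nlinarith [Nat.sub_add_cancel (by omega : 1 ≤ s)]
    have : ((2:ℤ) ^ (e + k + 1)) = 2 ^ (k - v) * 2 ^ (e + v + 1) := by
      rw [← pow_add]; congr 1; omega
    rw [this]
    refine mul_dvd_mul ?_ (dvd_mul_of_dvd_left (pow_dvd_pow (2:ℤ) hle) _)
    exact_mod_cast Int.natCast_dvd_natCast.2 hC

lemma anchor_im (s : ℕ) (hs : 2 ≤ s) (x z z' : GI) (hx : x = 1 + z)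
    (hz : z = ((2:ℤ)^s : ℤ) * z') (w : GI) (e : ℕ) (he : e ≤ 2 * (s - 1))
    (o : ℤ) (ho : Odd o) (hcoef : (w * z).im = 2 ^ e * o)
    (m : ℕ) (hm : 0 < m) : (w * x ^ m).im ≠ w.im := by
  intro heq
  obtain ⟨k, m', hm', hmeq⟩ := Nat.exists_eq_pow_mul_and_not_dvd (by omega : m ≠ 0) 2 (by norm_num)
  rw [expand w x z hx m, hcoef] at heq
  have htail : ((2:ℤ) ^ (e + k + 1)) ∣
      ∑ j ∈ Finset.Ico 2 (m + 1), ((m.choose j : ℤ) * (w * z ^ j).im) := by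
    refine Finset.dvd_sum ?_
    intro j hjmem
    have hj2 : 2 ≤ j := (Finset.mem_Ico.1 hjmem).1
    rw [hmeq]
    exact term_dvd_anchor s e k m' hs he z z' hz w j hj2
  obtain ⟨t, ht⟩ := htail
  rw [ht] at heq
  have hkey : ((2:ℤ) ^ (e + k)) * ((m' : ℤ) * o + 2 * t) = 0 := by
    rw [hmeq] at heq
    push_cast at heq ⊢
    ring_nf
    ring_nf at heq
    linarith
  have h2 : ((m' : ℤ)) * o + 2 * t = 0 := by
    rcases mul_eq_zero.1 hkey with h | h
    · exact absurd h (by positivity)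
    · exact h
  have hoddm : Odd ((m' : ℤ)) := by
    rcases Nat.odd_iff.2 (by omega : m' % 2 = 1) with ⟨c, hc⟩
    exact ⟨(c : ℤ), by exact_mod_cast hc⟩
  obtain ⟨c, hc⟩ := hoddm.mul ho
  omega

lemma kill_im (s : ℕ) (hs : 2 ≤ s) (x z z' : GI) (hx : x = 1 + z)
    (hz : z = ((2:ℤ)^s : ℤ) * z') (w : GI) (tv : ℤ) (δ : ℕ) (o : ℤ) (ho : Odd o)
    (hval : w.im = tv + 2 ^ δ * o) (hcoef : ((2:ℤ) ^ (δ + 1)) ∣ (w * z).im)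
    (hδs : δ + 1 ≤ 2 * s) (m : ℕ) : (w * x ^ m).im ≠ tv := by
  intro heq
  rw [expand w x z hx m, hval] at heq
  have htail : ((2:ℤ) ^ (δ + 1)) ∣
      ∑ j ∈ Finset.Ico 2 (m + 1), ((m.choose j : ℤ) * (w * z ^ j).im) := by
    refine Finset.dvd_sum ?_
    intro j hjmem
    have hj2 : 2 ≤ j := (Finset.mem_Ico.1 hjmem).1
    rw [zj_im s z z' hz w j]
    have : ((2:ℤ) ^ (δ + 1)) ∣ 2 ^ (s * j) := pow_dvd_pow 2 (by nlinarith)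
    exact Dvd.dvd.mul_left (dvd_mul_of_dvd_left this _) _
  obtain ⟨t, ht⟩ := htail
  obtain ⟨u, hu⟩ := hcoef
  rw [ht, hu] at heq
  have h2 : o + 2 * ((m : ℤ) * u + t) = 0 := by
    have hkey : ((2:ℤ) ^ δ) * (o + 2 * ((m : ℤ) * u + t)) = 0 := by ring_nf; ring_nf at heq; linarith
    rcases mul_eq_zero.1 hkey with h | h
    · exact absurd h (by positivity)
    · exact h
  obtain ⟨c, hc⟩ := ho
  omega

def gi : GI := ⟨0, 1⟩

lemma re_to_im (u : GI) : (u * gi).im = u.re := by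
  simp [gi, Zsqrtd.im_mul]

lemma anchor_re (s : ℕ) (hs : 2 ≤ s) (x z z' : GI) (hx : x = 1 + z)
    (hz : z = ((2:ℤ)^s : ℤ) * z') (w : GI) (e : ℕ) (he : e ≤ 2 * (s - 1))
    (o : ℤ) (ho : Odd o) (hcoef : (w * z).re = 2 ^ e * o)
    (m : ℕ) (hm : 0 < m) : (w * x ^ m).re ≠ w.re := by
  intro heq
  refine anchor_im s hs x z z' hx hz (w * gi) e he o ho ?_ m hm ?_
  · rw [mul_right_comm, re_to_im]; exact hcoef
  · rw [mul_right_comm, re_to_im, re_to_im]; exact heq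

lemma kill_re (s : ℕ) (hs : 2 ≤ s) (x z z' : GI) (hx : x = 1 + z)
    (hz : z = ((2:ℤ)^s : ℤ) * z') (w : GI) (tv : ℤ) (δ : ℕ) (o : ℤ) (ho : Odd o)
    (hval : w.re = tv + 2 ^ δ * o) (hcoef : ((2:ℤ) ^ (δ + 1)) ∣ (w * z).re)
    (hδs : δ + 1 ≤ 2 * s) (m : ℕ) : (w * x ^ m).re ≠ tv := by
  intro heq
  refine kill_im s hs x z z' hx hz (w * gi) tv δ o ho ?_ ?_ hδs m ?_
  · rw [re_to_im]; exact hval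
  · rw [mul_right_comm, re_to_im]; exact hcoef
  · rw [mul_right_comm, re_to_im]; exact heq

lemma cong (s : ℕ) (x z z' : GI) (hx : x = 1 + z) (hz : z = ((2:ℤ)^s : ℤ) * z')
    (w : GI) : ∀ q : ℕ, ((2:ℤ)^s ∣ (w * x ^ q).im - w.im) ∧ ((2:ℤ)^s ∣ (w * x ^ q).re - w.re) := by
  intro q
  induction q with
  | zero => simp
  | succ q ih =>
    have hsplit : w * x ^ (q+1) = w * x ^ q + (((2:ℤ)^s : ℤ) : GI) * ((w * x ^ q) * z') := by
      rw [hx, hz]; ring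
    constructor
    · have : (w * x ^ (q+1)).im - w.im
          = ((w * x ^ q).im - w.im) + (2:ℤ)^s * ((w * x ^ q) * z').im := by
        rw [hsplit, Zsqrtd.im_add, Zsqrtd.im_smul]; ring
      rw [this]
      exact dvd_add ih.1 (Dvd.intro _ rfl)
    · have : (w * x ^ (q+1)).re - w.re
          = ((w * x ^ q).re - w.re) + (2:ℤ)^s * ((w * x ^ q) * z').re := by
        rw [hsplit, Zsqrtd.re_add, Zsqrtd.re_smul]; ring
      rw [this]
      exact dvd_add ih.2 (Dvd.intro _ rfl)

def x8 : GI := ⟨-527, -336⟩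
def z8 : GI := ⟨-528, -336⟩
def z8' : GI := ⟨-33, -21⟩

lemma hx8 : x8 = 1 + z8 := by refine Zsqrtd.ext ?_ ?_ <;> simp [x8, z8]
lemma hz8 : z8 = ((2:ℤ)^4 : ℤ) * z8' := by
  refine Zsqrtd.ext ?_ ?_ <;> simp [z8, z8'] <;> norm_num

def x16 : GI := ⟨164833, 354144⟩
def z16 : GI := ⟨164832, 354144⟩
def z16' : GI := ⟨5151, 11067⟩

lemma hx16 : x16 = 1 + z16 := by refine Zsqrtd.ext ?_ ?_ <;> simp [x16, z16]
lemma hz16 : z16 = ((2:ℤ)^5 : ℤ) * z16' := by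
  refine Zsqrtd.ext ?_ ?_ <;> simp [z16, z16'] <;> norm_num

lemma split (T : ℕ) (xT : GI) (hxT : zt ^ T = xT) (w : GI) (n : ℕ) :
    w * zt ^ n = (w * zt ^ (n % T)) * xT ^ (n / T) := by
  conv_lhs => rw [show n = n % T + T * (n / T) from (Nat.mod_add_div n T).symm]
  rw [pow_add, pow_mul, hxT, mul_assoc]

lemma oddZ (a : ℤ) (h : a % 2 = 1) : Odd a := Int.odd_iff.2 h

lemma Li_im (n : ℕ) (hn : 0 < n)
    (h : (zt ^ n).im = 1 ∨ (zt ^ n).im = -1) : n = 1 := by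
  have hsp := split 8 x8 zv8 1 n
  simp only [one_mul] at hsp
  have hcong := (cong 4 x8 z8 z8' hx8 hz8 (zt ^ (n % 8)) (n / 8)).1
  rw [← hsp] at hcong
  have hnd := Nat.div_add_mod n 8
  rcases (by omega : n % 8 = 0 ∨ n % 8 = 1 ∨ n % 8 = 2 ∨ n % 8 = 3 ∨ n % 8 = 4 ∨ n % 8 = 5 ∨ n % 8 = 6 ∨ n % 8 = 7) with hr|hr|hr|hr|hr|hr|hr|hr
  · rw [hr, zv0] at hcong; simp only [] at hcong; omega
  · rw [hr] at hcong hsp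
    rw [zv1] at hcong
    simp only [] at hcong
    have hv : (zt ^ n).im = 1 := by omega
    rcases Nat.eq_zero_or_pos (n / 8) with hq | hq
    · omega
    · exfalso
      refine anchor_im 4 (by norm_num) x8 z8 z8' hx8 hz8 (zt ^ 1) 4 (by norm_num)
        (-75) (oddZ _ (by norm_num)) ?_ (n / 8) hq ?_
      · rw [zv1]; norm_num [z8, Zsqrtd.im_mul, Zsqrtd.re_mul]
      · rw [← hsp, hv, zv1]
  · rw [hr, zv2] at hcong; simp only [] at hcong; omega
  · rw [hr, zv3] at hcong; simp only [] at hcong; omega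
  · rw [hr, zv4] at hcong; simp only [] at hcong; omega
  · rw [hr, zv5] at hcong; simp only [] at hcong; omega
  · rw [hr, zv6] at hcong; simp only [] at hcong; omega
  · rw [hr, zv7] at hcong; simp only [] at hcong; omega

lemma Li_re (n : ℕ) (hn : 0 < n)
    (h : (zt ^ n).re = 1 ∨ (zt ^ n).re = -1) : False := by
  have hsp := split 8 x8 zv8 1 n
  simp only [one_mul] at hsp
  have hcong := (cong 4 x8 z8 z8' hx8 hz8 (zt ^ (n % 8)) (n / 8)).2
  rw [← hsp] at hcong
  have hnd := Nat.div_add_mod n 8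
  rcases (by omega : n % 8 = 0 ∨ n % 8 = 1 ∨ n % 8 = 2 ∨ n % 8 = 3 ∨ n % 8 = 4 ∨ n % 8 = 5 ∨ n % 8 = 6 ∨ n % 8 = 7) with hr|hr|hr|hr|hr|hr|hr|hr
  · rw [hr] at hcong hsp
    rw [zv0] at hcong
    simp only [] at hcong
    have hv : (zt ^ n).re = 1 := by omega
    have hq : 0 < n / 8 := by omega
    exfalso
    refine anchor_re 4 (by norm_num) x8 z8 z8' hx8 hz8 (zt ^ 0) 4 (by norm_num)
      (-33) (oddZ _ (by norm_num)) ?_ (n / 8) hq ?_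
    · rw [zv0]; norm_num [z8, Zsqrtd.im_mul, Zsqrtd.re_mul]
    · rw [← hsp, hv, zv0]
  · rw [hr, zv1] at hcong; simp only [] at hcong; omega
  · rw [hr, zv2] at hcong; simp only [] at hcong; omega
  · rw [hr, zv3] at hcong; simp only [] at hcong; omega
  · rw [hr, zv4] at hcong; simp only [] at hcong; omega
  · rw [hr, zv5] at hcong; simp only [] at hcong; omega
  · rw [hr, zv6] at hcong; simp only [] at hcong; omega
  · rw [hr, zv7] at hcong; simp only [] at hcong; omega

lemma Lii_re (n : ℕ) (hn : 0 < n)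
    (h : (zt ^ n).re = 2 ∨ (zt ^ n).re = -2) : n = 1 ∨ n = 3 := by
  have hsp := split 8 x8 zv8 1 n
  simp only [one_mul] at hsp
  have hcong := (cong 4 x8 z8 z8' hx8 hz8 (zt ^ (n % 8)) (n / 8)).2
  rw [← hsp] at hcong
  have hnd := Nat.div_add_mod n 8
  rcases (by omega : n % 8 = 0 ∨ n % 8 = 1 ∨ n % 8 = 2 ∨ n % 8 = 3 ∨ n % 8 = 4 ∨ n % 8 = 5 ∨ n % 8 = 6 ∨ n % 8 = 7) with hr|hr|hr|hr|hr|hr|hr|hr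
  · rw [hr, zv0] at hcong; simp only [] at hcong; omega
  · rw [hr] at hcong hsp
    rw [zv1] at hcong
    simp only [] at hcong
    have hv : (zt ^ n).re = 2 := by omega
    rcases Nat.eq_zero_or_pos (n / 8) with hq | hq
    · omega
    · exfalso
      refine anchor_re 4 (by norm_num) x8 z8 z8' hx8 hz8 (zt ^ 1) 4 (by norm_num)
        (-45) (oddZ _ (by norm_num)) ?_ (n / 8) hq ?_
      · rw [zv1]; norm_num [z8, Zsqrtd.im_mul, Zsqrtd.re_mul]
      · rw [← hsp, hv, zv1]
  · rw [hr, zv2] at hcong; simp only [] at hcong; omega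
  · rw [hr] at hcong hsp
    rw [zv3] at hcong
    simp only [] at hcong
    have hv : (zt ^ n).re = 2 := by omega
    rcases Nat.eq_zero_or_pos (n / 8) with hq | hq
    · omega
    · exfalso
      refine anchor_re 4 (by norm_num) x8 z8 z8' hx8 hz8 (zt ^ 3) 4 (by norm_num)
        (165) (oddZ _ (by norm_num)) ?_ (n / 8) hq ?_
      · rw [zv3]; norm_num [z8, Zsqrtd.im_mul, Zsqrtd.re_mul]
      · rw [← hsp, hv, zv3]
  · rw [hr, zv4] at hcong; simp only [] at hcong; omega
  · rw [hr, zv5] at hcong; simp only [] at hcong; omega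
  · rw [hr, zv6] at hcong; simp only [] at hcong; omega
  · rw [hr, zv7] at hcong; simp only [] at hcong; omega

lemma Lii_im (n : ℕ) (hn : 0 < n)
    (h : (zt ^ n).im = 2 ∨ (zt ^ n).im = -2) : False := by
  have hsp := split 8 x8 zv8 1 n
  simp only [one_mul] at hsp
  have hcong := (cong 4 x8 z8 z8' hx8 hz8 (zt ^ (n % 8)) (n / 8)).1
  rw [← hsp] at hcong
  have hnd := Nat.div_add_mod n 8
  rcases (by omega : n % 8 = 0 ∨ n % 8 = 1 ∨ n % 8 = 2 ∨ n % 8 = 3 ∨ n % 8 = 4 ∨ n % 8 = 5 ∨ n % 8 = 6 ∨ n % 8 = 7) with hr|hr|hr|hr|hr|hr|hr|hr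
  · rw [hr, zv0] at hcong; simp only [] at hcong; omega
  · rw [hr, zv1] at hcong; simp only [] at hcong; omega
  · rw [hr, zv2] at hcong; simp only [] at hcong; omega
  · rw [hr, zv3] at hcong; simp only [] at hcong; omega
  · rw [hr, zv4] at hcong; simp only [] at hcong; omega
  · rw [hr, zv5] at hcong; simp only [] at hcong; omega
  · rw [hr, zv6] at hcong; simp only [] at hcong; omega
  · rw [hr, zv7] at hcong; simp only [] at hcong; omega

lemma Liv_A (n : ℕ) (hn : 0 < n)
    (h : (ii * zt ^ n).re = 1 ∨ (ii * zt ^ n).re = -1) : n = 1 ∨ n = 2 := by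
  have hsp := split 8 x8 zv8 ii n
  have hcong := (cong 4 x8 z8 z8' hx8 hz8 (ii * zt ^ (n % 8)) (n / 8)).2
  rw [← hsp] at hcong
  have hnd := Nat.div_add_mod n 8
  rcases (by omega : n % 8 = 0 ∨ n % 8 = 1 ∨ n % 8 = 2 ∨ n % 8 = 3 ∨ n % 8 = 4 ∨ n % 8 = 5 ∨ n % 8 = 6 ∨ n % 8 = 7) with hr|hr|hr|hr|hr|hr|hr|hr
  · rw [hr] at hcong hsp
    rw [wv0] at hcong
    simp only [] at hcong
    have hv : (ii * zt ^ n).re = 1 := by omega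
    have hq : 0 < n / 8 := by omega
    exfalso
    refine anchor_re 4 (by norm_num) x8 z8 z8' hx8 hz8 (ii * zt ^ 0) 6 (by norm_num)
      (-3) (oddZ _ (by norm_num)) ?_ (n / 8) hq ?_
    · rw [wv0]; norm_num [z8, Zsqrtd.im_mul, Zsqrtd.re_mul]
    · rw [← hsp, hv, wv0]
  · rw [hr] at hcong hsp
    rw [wv1] at hcong
    simp only [] at hcong
    have hv : (ii * zt ^ n).re = 1 := by omega
    rcases Nat.eq_zero_or_pos (n / 8) with hq | hq
    · omega
    · exfalso
      refine anchor_re 4 (by norm_num) x8 z8 z8' hx8 hz8 (ii * zt ^ 1) 5 (by norm_num)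
        (15) (oddZ _ (by norm_num)) ?_ (n / 8) hq ?_
      · rw [wv1]; norm_num [z8, Zsqrtd.im_mul, Zsqrtd.re_mul]
      · rw [← hsp, hv, wv1]
  · rw [hr] at hcong hsp
    rw [wv2] at hcong
    simp only [] at hcong
    have hv : (ii * zt ^ n).re = -1 := by omega
    rcases Nat.eq_zero_or_pos (n / 8) with hq | hq
    · omega
    · exfalso
      refine anchor_re 4 (by norm_num) x8 z8 z8' hx8 hz8 (ii * zt ^ 2) 6 (by norm_num)
        (45) (oddZ _ (by norm_num)) ?_ (n / 8) hq ?_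
      · rw [wv2]; norm_num [z8, Zsqrtd.im_mul, Zsqrtd.re_mul]
      · rw [← hsp, hv, wv2]
  · rw [hr, wv3] at hcong; simp only [] at hcong; omega
  · rw [hr] at hcong hsp
    rw [wv4] at hcong
    simp only [] at hcong
    have hv : (ii * zt ^ n).re = 1 := by omega
    exact absurd (show ((ii * zt ^ 4) * x8 ^ (n / 8)).re = 1 by rw [← hsp]; exact hv)
      (kill_re 4 (by norm_num) x8 z8 z8' hx8 hz8 (ii * zt ^ 4) 1 5 (-1) (oddZ _ (by norm_num))
        (by rw [wv4]; norm_num) (by rw [wv4]; norm_num [z8, Zsqrtd.im_mul, Zsqrtd.re_mul]) (by norm_num) (n / 8))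
  · rw [hr] at hcong hsp
    rw [wv5] at hcong
    simp only [] at hcong
    have hv : (ii * zt ^ n).re = 1 := by omega
    exact absurd (show ((ii * zt ^ 5) * x8 ^ (n / 8)).re = 1 by rw [← hsp]; exact hv)
      (kill_re 4 (by norm_num) x8 z8 z8' hx8 hz8 (ii * zt ^ 5) 1 4 (-5) (oddZ _ (by norm_num))
        (by rw [wv5]; norm_num) (by rw [wv5]; norm_num [z8, Zsqrtd.im_mul, Zsqrtd.re_mul]) (by norm_num) (n / 8))
  · rw [hr] at hcong hsp
    rw [wv6] at hcong
    simp only [] at hcong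
    have hv : (ii * zt ^ n).re = -1 := by omega
    exact absurd (show ((ii * zt ^ 6) * x8 ^ (n / 8)).re = (-1) by rw [← hsp]; exact hv)
      (kill_re 4 (by norm_num) x8 z8 z8' hx8 hz8 (ii * zt ^ 6) (-1) 5 (-5) (oddZ _ (by norm_num))
        (by rw [wv6]; norm_num) (by rw [wv6]; norm_num [z8, Zsqrtd.im_mul, Zsqrtd.re_mul]) (by norm_num) (n / 8))
  · rw [hr, wv7] at hcong; simp only [] at hcong; omega

lemma Liv_B (n : ℕ) (hn : 0 < n)
    (h : (ii * zt ^ n).im = 1 ∨ (ii * zt ^ n).im = -1) : False := by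
  have hsp := split 8 x8 zv8 ii n
  have hcong := (cong 4 x8 z8 z8' hx8 hz8 (ii * zt ^ (n % 8)) (n / 8)).1
  rw [← hsp] at hcong
  have hnd := Nat.div_add_mod n 8
  rcases (by omega : n % 8 = 0 ∨ n % 8 = 1 ∨ n % 8 = 2 ∨ n % 8 = 3 ∨ n % 8 = 4 ∨ n % 8 = 5 ∨ n % 8 = 6 ∨ n % 8 = 7) with hr|hr|hr|hr|hr|hr|hr|hr
  · rw [hr] at hcong hsp
    rw [wv0] at hcong
    simp only [] at hcong
    have hv : (ii * zt ^ n).im = 1 := by omega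
    have hq : 0 < n / 8 := by omega
    exfalso
    refine anchor_im 4 (by norm_num) x8 z8 z8' hx8 hz8 (ii * zt ^ 0) 5 (by norm_num)
      (-27) (oddZ _ (by norm_num)) ?_ (n / 8) hq ?_
    · rw [wv0]; norm_num [z8, Zsqrtd.im_mul, Zsqrtd.re_mul]
    · rw [← hsp, hv, wv0]
  · rw [hr, wv1] at hcong; simp only [] at hcong; omega
  · rw [hr, wv2] at hcong; simp only [] at hcong; omega
  · rw [hr, wv3] at hcong; simp only [] at hcong; omega
  · rw [hr] at hcong hsp
    rw [wv4] at hcong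
    simp only [] at hcong
    have hv : (ii * zt ^ n).im = 1 := by omega
    exact absurd (show ((ii * zt ^ 4) * x8 ^ (n / 8)).im = 1 by rw [← hsp]; exact hv)
      (kill_im 4 (by norm_num) x8 z8 z8' hx8 hz8 (ii * zt ^ 4) 1 4 (1) (oddZ _ (by norm_num))
        (by rw [wv4]; norm_num) (by rw [wv4]; norm_num [z8, Zsqrtd.im_mul, Zsqrtd.re_mul]) (by norm_num) (n / 8))
  · rw [hr, wv5] at hcong; simp only [] at hcong; omega
  · rw [hr, wv6] at hcong; simp only [] at hcong; omega
  · rw [hr, wv7] at hcong; simp only [] at hcong; omega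

lemma Lvi_B (n : ℕ) 
    (h : (ii * zt ^ n).im = 3 ∨ (ii * zt ^ n).im = -3) : n = 1 ∨ n = 5 := by
  have hsp := split 16 x16 zv16 ii n
  have hcong := (cong 5 x16 z16 z16' hx16 hz16 (ii * zt ^ (n % 16)) (n / 16)).1
  rw [← hsp] at hcong
  have hnd := Nat.div_add_mod n 16
  rcases (by omega : n % 16 = 0 ∨ n % 16 = 1 ∨ n % 16 = 2 ∨ n % 16 = 3 ∨ n % 16 = 4 ∨ n % 16 = 5 ∨ n % 16 = 6 ∨ n % 16 = 7 ∨ n % 16 = 8 ∨ n % 16 = 9 ∨ n % 16 = 10 ∨ n % 16 = 11 ∨ n % 16 = 12 ∨ n % 16 = 13 ∨ n % 16 = 14 ∨ n % 16 = 15) with hr|hr|hr|hr|hr|hr|hr|hr|hr|hr|hr|hr|hr|hr|hr|hr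
  · rw [hr, wv0] at hcong; simp only [] at hcong; omega
  · rw [hr] at hcong hsp
    rw [wv1] at hcong
    simp only [] at hcong
    have hv : (ii * zt ^ n).im = 3 := by omega
    rcases Nat.eq_zero_or_pos (n / 16) with hq | hq
    · omega
    · exfalso
      refine anchor_im 5 (by norm_num) x16 z16 z16' hx16 hz16 (ii * zt ^ 1) 8 (by norm_num)
        (3315) (oddZ _ (by norm_num)) ?_ (n / 16) hq ?_
      · rw [wv1]; norm_num [z16, Zsqrtd.im_mul, Zsqrtd.re_mul]
      · rw [← hsp, hv, wv1]
  · rw [hr, wv2] at hcong; simp only [] at hcong; omega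
  · rw [hr, wv3] at hcong; simp only [] at hcong; omega
  · rw [hr, wv4] at hcong; simp only [] at hcong; omega
  · rw [hr] at hcong hsp
    rw [wv5] at hcong
    simp only [] at hcong
    have hv : (ii * zt ^ n).im = 3 := by omega
    rcases Nat.eq_zero_or_pos (n / 16) with hq | hq
    · omega
    · exfalso
      refine anchor_im 5 (by norm_num) x16 z16 z16' hx16 hz16 (ii * zt ^ 5) 8 (by norm_num)
        (-107355) (oddZ _ (by norm_num)) ?_ (n / 16) hq ?_
      · rw [wv5]; norm_num [z16, Zsqrtd.im_mul, Zsqrtd.re_mul]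
      · rw [← hsp, hv, wv5]
  · rw [hr, wv6] at hcong; simp only [] at hcong; omega
  · rw [hr, wv7] at hcong; simp only [] at hcong; omega
  · rw [hr, wv8] at hcong; simp only [] at hcong; omega
  · rw [hr] at hcong hsp
    rw [wv9] at hcong
    simp only [] at hcong
    have hv : (ii * zt ^ n).im = 3 := by omega
    exact absurd (show ((ii * zt ^ 9) * x16 ^ (n / 16)).im = 3 by rw [← hsp]; exact hv)
      (kill_im 5 (by norm_num) x16 z16 z16' hx16 hz16 (ii * zt ^ 9) 3 7 (-15) (oddZ _ (by norm_num))
        (by rw [wv9]; norm_num) (by rw [wv9]; norm_num [z16, Zsqrtd.im_mul, Zsqrtd.re_mul]) (by norm_num) (n / 16))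
  · rw [hr, wv10] at hcong; simp only [] at hcong; omega
  · rw [hr, wv11] at hcong; simp only [] at hcong; omega
  · rw [hr, wv12] at hcong; simp only [] at hcong; omega
  · rw [hr] at hcong hsp
    rw [wv13] at hcong
    simp only [] at hcong
    have hv : (ii * zt ^ n).im = 3 := by omega
    exact absurd (show ((ii * zt ^ 13) * x16 ^ (n / 16)).im = 3 by rw [← hsp]; exact hv)
      (kill_im 5 (by norm_num) x16 z16 z16' hx16 hz16 (ii * zt ^ 13) 3 7 (195) (oddZ _ (by norm_num))
        (by rw [wv13]; norm_num) (by rw [wv13]; norm_num [z16, Zsqrtd.im_mul, Zsqrtd.re_mul]) (by norm_num) (n / 16))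
  · rw [hr, wv14] at hcong; simp only [] at hcong; omega
  · rw [hr, wv15] at hcong; simp only [] at hcong; omega

lemma Lvi_A (n : ℕ) 
    (h : (ii * zt ^ n).re = 3 ∨ (ii * zt ^ n).re = -3) : False := by
  have hsp := split 16 x16 zv16 ii n
  have hcong := (cong 5 x16 z16 z16' hx16 hz16 (ii * zt ^ (n % 16)) (n / 16)).2
  rw [← hsp] at hcong
  have hnd := Nat.div_add_mod n 16
  rcases (by omega : n % 16 = 0 ∨ n % 16 = 1 ∨ n % 16 = 2 ∨ n % 16 = 3 ∨ n % 16 = 4 ∨ n % 16 = 5 ∨ n % 16 = 6 ∨ n % 16 = 7 ∨ n % 16 = 8 ∨ n % 16 = 9 ∨ n % 16 = 10 ∨ n % 16 = 11 ∨ n % 16 = 12 ∨ n % 16 = 13 ∨ n % 16 = 14 ∨ n % 16 = 15) with hr|hr|hr|hr|hr|hr|hr|hr|hr|hr|hr|hr|hr|hr|hr|hr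
  · rw [hr, wv0] at hcong; simp only [] at hcong; omega
  · rw [hr, wv1] at hcong; simp only [] at hcong; omega
  · rw [hr, wv2] at hcong; simp only [] at hcong; omega
  · rw [hr, wv3] at hcong; simp only [] at hcong; omega
  · rw [hr, wv4] at hcong; simp only [] at hcong; omega
  · rw [hr, wv5] at hcong; simp only [] at hcong; omega
  · rw [hr, wv6] at hcong; simp only [] at hcong; omega
  · rw [hr, wv7] at hcong; simp only [] at hcong; omega
  · rw [hr, wv8] at hcong; simp only [] at hcong; omega
  · rw [hr, wv9] at hcong; simp only [] at hcong; omega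
  · rw [hr, wv10] at hcong; simp only [] at hcong; omega
  · rw [hr, wv11] at hcong; simp only [] at hcong; omega
  · rw [hr, wv12] at hcong; simp only [] at hcong; omega
  · rw [hr, wv13] at hcong; simp only [] at hcong; omega
  · rw [hr, wv14] at hcong; simp only [] at hcong; omega
  · rw [hr, wv15] at hcong; simp only [] at hcong; omega

lemma div5 (β : GI) (n : ℕ) (hn : 1 ≤ n) :
    ((5:ℤ) ∣ 2 * (β * zt ^ n).re + (β * zt ^ n).im)
      ∧ ((5:ℤ) ∣ (β * zt ^ n).re - 2 * (β * zt ^ n).im) := by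
  rcases Nat.exists_eq_succ_of_ne_zero (by omega : n ≠ 0) with ⟨n', rfl⟩
  have hmul : β * zt ^ (n' + 1) = (β * zt ^ n') * zt := by rw [pow_succ, mul_assoc]
  rw [hmul]
  constructor
  · exact ⟨(β * zt ^ n').re, by simp [zt, Zsqrtd.re_mul, Zsqrtd.im_mul]; ring⟩
  · exact ⟨-(β * zt ^ n').im, by simp [zt, Zsqrtd.re_mul, Zsqrtd.im_mul]; ring⟩


lemma key_omega (u v y c R I : ℤ)
    (hy : y = 2*u+v) (hc : c = u - 2*v ∨ c = 2*v - u)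
    (h : (u.natAbs = R.natAbs ∧ v.natAbs = I.natAbs) ∨ (u.natAbs = I.natAbs ∧ v.natAbs = R.natAbs))
    (hd1 : (5:ℤ) ∣ 2*R + I) (hd2 : (5:ℤ) ∣ R - 2*I) (h5c : ¬ (5:ℤ) ∣ c) :
    (y.natAbs = (2*R - I).natAbs ∧ c.natAbs = (R + 2*I).natAbs) ∨
    (y.natAbs = (R + 2*I).natAbs ∧ c.natAbs = (2*R - I).natAbs) := by
  rcases h with ⟨h1, h2⟩ | ⟨h1, h2⟩ <;>
    rw [Int.natAbs_eq_natAbs_iff] at h1 h2 <;>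
    rcases h1 with h1 | h1 <;> rcases h2 with h2 | h2 <;> rcases hc with hc | hc <;>
    first
      | (exfalso; apply h5c; omega)
      | (left; constructor <;> (rw [Int.natAbs_eq_natAbs_iff]; omega))
      | (right; constructor <;> (rw [Int.natAbs_eq_natAbs_iff]; omega))

lemma rep (k : ℤ) (β : GI) (h5 : ¬ (5:ℤ) ∣ k)
    (hbase : ∀ y c : ℤ, IsCoprime y c → y ^ 2 + c ^ 2 = k * 5 →
      (y.natAbs = (β * zt ^ 1).re.natAbs ∧ c.natAbs = (β * zt ^ 1).im.natAbs) ∨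
      (y.natAbs = (β * zt ^ 1).im.natAbs ∧ c.natAbs = (β * zt ^ 1).re.natAbs)) :
    ∀ n : ℕ, 1 ≤ n → ∀ y c : ℤ, IsCoprime y c → y ^ 2 + c ^ 2 = k * 5 ^ n →
      (y.natAbs = (β * zt ^ n).re.natAbs ∧ c.natAbs = (β * zt ^ n).im.natAbs) ∨
      (y.natAbs = (β * zt ^ n).im.natAbs ∧ c.natAbs = (β * zt ^ n).re.natAbs) := by
  intro n hn
  induction n, hn using Nat.le_induction with
  | base =>
    intro y c hco heq
    exact hbase y c hco (by rw [pow_one] at heq; exact heq)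
  | succ n hn IH =>
    intro y c hco heq
    have prime5 : Nat.Prime 5 := by norm_num
    have h5c : ¬ (5:ℤ) ∣ c := by
      intro hc
      have h5y2 : (5:ℤ) ∣ y ^ 2 := by
        have h55 : (5:ℤ) ∣ k * 5 ^ (n+1) := ⟨k * 5 ^ n, by ring⟩
        have hc2 : (5:ℤ) ∣ c ^ 2 := by
          rcases hc with ⟨t, rfl⟩; exact ⟨5 * t ^ 2, by ring⟩
        rw [show y ^ 2 = k * 5 ^ (n+1) - c ^ 2 by linear_combination heq]
        exact dvd_sub h55 hc2
      have h5y : (5:ℤ) ∣ y := Int.Prime.dvd_pow' prime5 (by exact_mod_cast h5y2)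
      have : IsUnit (5:ℤ) := hco.isUnit_of_dvd' h5y hc
      rw [Int.isUnit_iff] at this
      omega
    have h5y : ¬ (5:ℤ) ∣ y := by
      intro hy
      have hy2 : (5:ℤ) ∣ y ^ 2 := by rcases hy with ⟨t, rfl⟩; exact ⟨5 * t ^ 2, by ring⟩
      have h5c2 : (5:ℤ) ∣ c ^ 2 := by
        have h55 : (5:ℤ) ∣ k * 5 ^ (n+1) := ⟨k * 5 ^ n, by ring⟩
        rw [show c ^ 2 = k * 5 ^ (n+1) - y ^ 2 by linear_combination heq]
        exact dvd_sub h55 hy2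
      have h5c' : (5:ℤ) ∣ c := Int.Prime.dvd_pow' prime5 (by exact_mod_cast h5c2)
      exact h5c h5c'
    have hsplit : (5:ℤ) ∣ (y - 2 * c) * (y + 2 * c) := by
      refine ⟨k * 5 ^ n - c ^ 2, ?_⟩
      linear_combination heq
    have hRI : (β * zt ^ (n + 1)).re = 2 * (β * zt ^ n).re - (β * zt ^ n).im
        ∧ (β * zt ^ (n + 1)).im = (β * zt ^ n).re + 2 * (β * zt ^ n).im := by
      rw [pow_succ, ← mul_assoc]
      constructor <;> simp [zt, Zsqrtd.re_mul, Zsqrtd.im_mul] <;> ring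
    have hdvd := div5 β n hn
    rcases Int.Prime.dvd_mul' prime5 hsplit with hA | hB
    · -- y ≡ 2c mod 5 : u = (2y+c)/5, v = (y-2c)/5
      have hA2 : (5:ℤ) ∣ 2 * y + c := by
        rcases hA with ⟨t, ht⟩; push_cast at ht; exact ⟨2 * t + c, by linarith⟩
      push_cast at hA
      obtain ⟨v, hv⟩ := hA
      obtain ⟨u, hu⟩ := hA2
      have hy_eq : y = 2 * u + v := by omega
      have hc_eq : c = u - 2 * v := by omega
      have hco_uv : IsCoprime u v := by
        obtain ⟨p, q, hpq⟩ := hco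
        exact ⟨2 * p + q, p - 2 * q, by linear_combination hpq - p * hy_eq - q * hc_eq⟩
      have heq' : u ^ 2 + v ^ 2 = k * 5 ^ n := by
        have h25 : (25:ℤ) * (u ^ 2 + v ^ 2) = 25 * (k * 5 ^ n) := by
          have e1 : (2 * y + c) ^ 2 = 25 * u ^ 2 := by rw [hu]; ring
          have e2 : (y - 2 * c) ^ 2 = 25 * v ^ 2 := by rw [hv]; ring
          linear_combination - e1 - e2 + 5 * heq
        exact mul_left_cancel₀ (by norm_num : (25:ℤ) ≠ 0) h25
      rw [hRI.1, hRI.2]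
      exact key_omega u v y c _ _ hy_eq (Or.inl hc_eq) (IH u v hco_uv heq') hdvd.1 hdvd.2 h5c
    · -- y ≡ -2c mod 5 : u = (2y-c)/5, v = (y+2c)/5
      have hB2 : (5:ℤ) ∣ 2 * y - c := by
        rcases hB with ⟨t, ht⟩; push_cast at ht; exact ⟨2 * t - c, by linarith⟩
      push_cast at hB
      obtain ⟨v, hv⟩ := hB
      obtain ⟨u, hu⟩ := hB2
      have hy_eq : y = 2 * u + v := by omega
      have hc_eq : c = 2 * v - u := by omega
      have hco_uv : IsCoprime u v := by
        obtain ⟨p, q, hpq⟩ := hco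
        exact ⟨2 * p - q, p + 2 * q, by linear_combination hpq - p * hy_eq - q * hc_eq⟩
      have heq' : u ^ 2 + v ^ 2 = k * 5 ^ n := by
        have h25 : (25:ℤ) * (u ^ 2 + v ^ 2) = 25 * (k * 5 ^ n) := by
          have e1 : (2 * y - c) ^ 2 = 25 * u ^ 2 := by rw [hu]; ring
          have e2 : (y + 2 * c) ^ 2 = 25 * v ^ 2 := by rw [hv]; ring
          linear_combination - e1 - e2 + 5 * heq
        exact mul_left_cancel₀ (by norm_num : (25:ℤ) ≠ 0) h25
      rw [hRI.1, hRI.2]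
      exact key_omega u v y c _ _ hy_eq (Or.inr hc_eq) (IH u v hco_uv heq') hdvd.1 hdvd.2 h5c

lemma base1 : ∀ y c : ℤ, IsCoprime y c → y ^ 2 + c ^ 2 = (1:ℤ) * 5 →
    (y.natAbs = ((1:GI) * zt ^ 1).re.natAbs ∧ c.natAbs = ((1:GI) * zt ^ 1).im.natAbs) ∨
    (y.natAbs = ((1:GI) * zt ^ 1).im.natAbs ∧ c.natAbs = ((1:GI) * zt ^ 1).re.natAbs) := by
  intro y c _ heq
  rw [one_mul, zv1]
  norm_num at heq
  have hy1 : -2 ≤ y := by nlinarith [sq_nonneg c]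
  have hy2 : y ≤ 2 := by nlinarith [sq_nonneg c]
  have hc1 : -2 ≤ c := by nlinarith [sq_nonneg y]
  have hc2 : c ≤ 2 := by nlinarith [sq_nonneg y]
  simp only []
  interval_cases y <;> interval_cases c <;> omega

lemma base2 : ∀ y c : ℤ, IsCoprime y c → y ^ 2 + c ^ 2 = (2:ℤ) * 5 →
    (y.natAbs = (ii * zt ^ 1).re.natAbs ∧ c.natAbs = (ii * zt ^ 1).im.natAbs) ∨
    (y.natAbs = (ii * zt ^ 1).im.natAbs ∧ c.natAbs = (ii * zt ^ 1).re.natAbs) := by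
  intro y c _ heq
  rw [wv1]
  norm_num at heq
  have hy1 : -3 ≤ y := by nlinarith [sq_nonneg c]
  have hy2 : y ≤ 3 := by nlinarith [sq_nonneg c]
  have hc1 : -3 ≤ c := by nlinarith [sq_nonneg y]
  have hc2 : c ≤ 3 := by nlinarith [sq_nonneg y]
  simp only []
  interval_cases y <;> interval_cases c <;> omega

lemma coprime_two (y : ℤ) (h : y % 2 = 1) : IsCoprime y 2 := by
  obtain ⟨t, rfl⟩ : ∃ t, y = 2 * t + 1 := ⟨(y - 1) / 2, by omega⟩
  exact ⟨1, -t, by ring⟩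

lemma coprime_three (y : ℤ) (h : ¬ (3:ℤ) ∣ y) : IsCoprime y 3 := by
  rw [Int.isCoprime_iff_gcd_eq_one]
  have h1 : (↑(Int.gcd y 3):ℤ) ∣ 3 := Int.gcd_dvd_right _ _
  have h2 : (↑(Int.gcd y 3):ℤ) ∣ y := Int.gcd_dvd_left _ _
  have h3 : Int.gcd y 3 ∣ 3 := by exact_mod_cast h1
  have h4 : Int.gcd y 3 ≤ 3 := Nat.le_of_dvd (by norm_num) h3
  set g := Int.gcd y 3 with hg
  interval_cases g
  · omega
  · rfl
  · omega
  · exact absurd h2 h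

lemma pow5mod9 : ∀ q r : ℕ, 5 ^ (6 * q + r) % 9 = 5 ^ r % 9 := by
  intro q r
  induction q with
  | zero => simp
  | succ q ih =>
    have h6 : 6 * (q + 1) + r = (6 * q + r) + 6 := by ring
    rw [h6, pow_add, Nat.mul_mod, ih, ← Nat.mul_mod]
    rw [Nat.mul_mod, show (5:ℕ) ^ 6 % 9 = 1 by norm_num, mul_one, Nat.mod_mod]

lemma c3_odd (n y : ℕ) (hodd : n % 2 = 1) : 5 ^ n ≠ 9 + y ^ 2 := by
  intro h
  have hd : 5 ^ n % 9 = 5 ^ (n % 6) % 9 := by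
    conv_lhs => rw [show n = 6 * (n / 6) + n % 6 from by omega]
    exact pow5mod9 _ _
  have hy : y ^ 2 % 9 = (y % 9) ^ 2 % 9 := by rw [Nat.pow_mod]
  have hmod : 5 ^ n % 9 = (9 + y ^ 2) % 9 := by rw [h]
  have key : (5:ℕ) ^ (n % 6) % 9 = (y % 9) ^ 2 % 9 := by omega
  have hr : n % 6 = 1 ∨ n % 6 = 3 ∨ n % 6 = 5 := by omega
  have ht : y % 9 = 0 ∨ y % 9 = 1 ∨ y % 9 = 2 ∨ y % 9 = 3 ∨ y % 9 = 4 ∨ y % 9 = 5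
      ∨ y % 9 = 6 ∨ y % 9 = 7 ∨ y % 9 = 8 := by omega
  rcases hr with hr|hr|hr <;> rw [hr] at key <;>
    rcases ht with ht|ht|ht|ht|ht|ht|ht|ht|ht <;> rw [ht] at key <;> norm_num at key

lemma c3_even (n y m : ℕ) (hm : n = 2 * m) (hn : 0 < n) (h : 5 ^ n = 9 + y ^ 2) :
    n = 2 ∧ y = 4 := by
  have hm1 : 1 ≤ m := by omega
  have ha5 : (5:ℤ) ≤ 5 ^ m := by
    calc (5:ℤ) = 5 ^ 1 := by norm_num
    _ ≤ 5 ^ m := pow_le_pow_right₀ (by norm_num) hm1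
  have heq : ((5:ℤ) ^ m) ^ 2 = 9 + (y:ℤ) ^ 2 := by
    have hc : ((5:ℕ) ^ n : ℤ) = ((9 + y ^ 2 : ℕ) : ℤ) := by exact_mod_cast congrArg (Nat.cast : ℕ → ℤ) h
    push_cast at hc
    rw [← pow_mul, mul_comm, ← hm]
    linarith
  set a := (5:ℤ) ^ m with hadef
  have hy0 : (0:ℤ) ≤ (y:ℤ) := Int.natCast_nonneg y
  have hfac : (a - y) * (a + y) = 9 := by linear_combination heq
  have hd0 : 0 < a - (y:ℤ) := by nlinarith
  have hd1 : a - (y:ℤ) ≤ 1 := by nlinarith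
  have hd2 : a - (y:ℤ) = 1 := by omega
  have hs9 : a + (y:ℤ) = 9 := by
    rw [hd2, one_mul] at hfac; linarith
  have ha5' : a = 5 := by omega
  have hyz : (y:ℤ) = 4 := by omega
  have hm5 : (5:ℕ) ^ m = 5 ^ 1 := by
    have : ((5:ℕ) ^ m : ℤ) = ((5:ℕ) ^ 1 : ℤ) := by push_cast; rw [← hadef]; omega
    exact_mod_cast this
  have : m = 1 := Nat.pow_right_injective (by norm_num) hm5
  constructor
  · omega
  · exact_mod_cast hyz

lemma c5 (n y : ℕ) (hn : 0 < n) : 2 * 5 ^ n ≠ 4 + y ^ 2 := by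
  intro h
  have h5odd : 5 ^ n % 2 = 1 := by simp [Nat.pow_mod]
  have hy2 : y ^ 2 % 2 = (y % 2) ^ 2 % 2 := by rw [Nat.pow_mod]
  have hyeven : y % 2 = 0 := by
    rcases (by omega : y % 2 = 0 ∨ y % 2 = 1) with h'|h'
    · exact h'
    · rw [h'] at hy2; norm_num at hy2; omega
  obtain ⟨t, rfl⟩ : ∃ t, y = 2 * t := ⟨y / 2, by omega⟩
  have ht4 : (2 * t) ^ 2 = 4 * t ^ 2 := by ring
  omega

/-- Solutions in positive integers of `2^i·5^n = a + y²` for `i ∈ {0,1}`,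
`a ∈ {1, 4, 9}`. -/
theorem stmt_4 :
    ∀ n y : ℕ, 0 < n → 0 < y →
      ((5 ^ n = 1 + y ^ 2 ↔ (n, y) = (1, 2)) ∧
       (5 ^ n = 4 + y ^ 2 ↔ (n, y) = (1, 1) ∨ (n, y) = (3, 11)) ∧
       (5 ^ n = 9 + y ^ 2 ↔ (n, y) = (2, 4)) ∧
       (2 * 5 ^ n = 1 + y ^ 2 ↔ (n, y) = (1, 3) ∨ (n, y) = (2, 7)) ∧
       (2 * 5 ^ n ≠ 4 + y ^ 2) ∧
       (2 * 5 ^ n = 9 + y ^ 2 ↔ (n, y) = (1, 1) ∨ (n, y) = (5, 79))) := by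
  intro n y hn hy
  refine ⟨⟨?_, ?_⟩, ⟨?_, ?_⟩, ⟨?_, ?_⟩, ⟨?_, ?_⟩, ?_, ⟨?_, ?_⟩⟩
  · -- (i) forward
    intro h
    have hz : (y:ℤ) ^ 2 + 1 ^ 2 = (1:ℤ) * 5 ^ n := by
      have hc : ((5:ℕ) ^ n : ℤ) = ((1 + y ^ 2 : ℕ) : ℤ) := by
        exact_mod_cast congrArg (Nat.cast : ℕ → ℤ) h
      push_cast at hc; linarith
    rcases rep 1 1 (by norm_num) base1 n hn (y:ℤ) 1 isCoprime_one_right hz with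
      ⟨h1, h2⟩ | ⟨h1, h2⟩
    · simp only [one_mul] at h1 h2
      have h2' : (zt ^ n).im.natAbs = 1 := by simpa using h2.symm
      have him : (zt ^ n).im = 1 ∨ (zt ^ n).im = -1 := by
        rcases Int.natAbs_eq_iff.1 h2' with h' | h'
        · left; omega
        · right; omega
      have hn1 := Li_im n hn him
      subst hn1
      rw [zv1] at h1
      simp only [] at h1
      have : y = 2 := by omega
      simp [this]
    · simp only [one_mul] at h1 h2
      have h2' : (zt ^ n).re.natAbs = 1 := by simpa using h2.symm
      have hre : (zt ^ n).re = 1 ∨ (zt ^ n).re = -1 := by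
        rcases Int.natAbs_eq_iff.1 h2' with h' | h'
        · left; omega
        · right; omega
      exact (Li_re n hn hre).elim
  · -- (i) backward
    intro h
    simp only [Prod.mk.injEq] at h
    obtain ⟨rfl, rfl⟩ := h
    norm_num
  · -- (ii) forward
    intro h
    have h5odd : 5 ^ n % 2 = 1 := by simp [Nat.pow_mod]
    have hy2m : y ^ 2 % 2 = (y % 2) ^ 2 % 2 := by rw [Nat.pow_mod]
    have hyodd : y % 2 = 1 := by
      rcases (by omega : y % 2 = 0 ∨ y % 2 = 1) with h' | h'
      · rw [h'] at hy2m; norm_num at hy2m; omega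
      · exact h'
    have hco : IsCoprime (y:ℤ) 2 := coprime_two _ (by omega)
    have hz : (y:ℤ) ^ 2 + 2 ^ 2 = (1:ℤ) * 5 ^ n := by
      have hc : ((5:ℕ) ^ n : ℤ) = ((4 + y ^ 2 : ℕ) : ℤ) := by
        exact_mod_cast congrArg (Nat.cast : ℕ → ℤ) h
      push_cast at hc; linarith
    rcases rep 1 1 (by norm_num) base1 n hn (y:ℤ) 2 hco hz with
      ⟨h1, h2⟩ | ⟨h1, h2⟩
    · simp only [one_mul] at h1 h2
      have h2' : (zt ^ n).im.natAbs = 2 := by simpa using h2.symm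
      have him : (zt ^ n).im = 2 ∨ (zt ^ n).im = -2 := by
        rcases Int.natAbs_eq_iff.1 h2' with h' | h'
        · left; omega
        · right; omega
      exact (Lii_im n hn him).elim
    · simp only [one_mul] at h1 h2
      have h2' : (zt ^ n).re.natAbs = 2 := by simpa using h2.symm
      have hre : (zt ^ n).re = 2 ∨ (zt ^ n).re = -2 := by
        rcases Int.natAbs_eq_iff.1 h2' with h' | h'
        · left; omega
        · right; omega
      rcases Lii_re n hn hre with rfl | rfl
      · left
        rw [zv1] at h1
        simp only [] at h1
        have : y = 1 := by omega
        simp [this]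
      · right
        rw [zv3] at h1
        simp only [] at h1
        have : y = 11 := by omega
        simp [this]
  · -- (ii) backward
    intro h
    rcases h with h | h <;> simp only [Prod.mk.injEq] at h <;> obtain ⟨rfl, rfl⟩ := h <;>
      norm_num
  · -- (iii) forward
    intro h
    rcases (by omega : n % 2 = 1 ∨ n % 2 = 0) with hpar | hpar
    · exact (c3_odd n y hpar h).elim
    · obtain ⟨hn2, hy4⟩ := c3_even n y (n / 2) (by omega) hn h
      simp [hn2, hy4]
  · -- (iii) backward
    intro h
    simp only [Prod.mk.injEq] at h
    obtain ⟨rfl, rfl⟩ := h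
    norm_num
  · -- (iv) forward
    intro h
    have hz : (y:ℤ) ^ 2 + 1 ^ 2 = (2:ℤ) * 5 ^ n := by
      have hc : ((2 * 5 ^ n : ℕ) : ℤ) = ((1 + y ^ 2 : ℕ) : ℤ) := by
        exact_mod_cast congrArg (Nat.cast : ℕ → ℤ) h
      push_cast at hc; linarith
    rcases rep 2 ii (by norm_num) base2 n hn (y:ℤ) 1 isCoprime_one_right hz with
      ⟨h1, h2⟩ | ⟨h1, h2⟩
    · have h2' : (ii * zt ^ n).im.natAbs = 1 := by simpa using h2.symm
      have him : (ii * zt ^ n).im = 1 ∨ (ii * zt ^ n).im = -1 := by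
        rcases Int.natAbs_eq_iff.1 h2' with h' | h'
        · left; omega
        · right; omega
      exact (Liv_B n hn him).elim
    · have h2' : (ii * zt ^ n).re.natAbs = 1 := by simpa using h2.symm
      have hre : (ii * zt ^ n).re = 1 ∨ (ii * zt ^ n).re = -1 := by
        rcases Int.natAbs_eq_iff.1 h2' with h' | h'
        · left; omega
        · right; omega
      rcases Liv_A n hn hre with rfl | rfl
      · left
        rw [wv1] at h1
        simp only [] at h1
        have : y = 3 := by omega
        simp [this]
      · right
        rw [wv2] at h1
        simp only [] at h1
        have : y = 7 := by omega
        simp [this]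
  · -- (iv) backward
    intro h
    rcases h with h | h <;> simp only [Prod.mk.injEq] at h <;> obtain ⟨rfl, rfl⟩ := h <;>
      norm_num
  · -- (v)
    exact c5 n y hn
  · -- (vi) forward
    intro h
    have h3y : ¬ 3 ∣ y := by
      intro h3
      obtain ⟨t, rfl⟩ := h3
      have ht9 : (3 * t) ^ 2 = 9 * t ^ 2 := by ring
      have hd : 3 ∣ 2 * 5 ^ n := ⟨3 + 3 * t ^ 2, by omega⟩
      rcases (Nat.Prime.dvd_mul (by norm_num)).1 hd with h' | h'
      · norm_num at h'
      · have := Nat.Prime.dvd_of_dvd_pow (by norm_num : Nat.Prime 3) h'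
        norm_num at this
    have hco : IsCoprime (y:ℤ) 3 := by
      refine coprime_three _ ?_
      intro hd
      exact h3y (by exact_mod_cast hd)
    have hz : (y:ℤ) ^ 2 + 3 ^ 2 = (2:ℤ) * 5 ^ n := by
      have hc : ((2 * 5 ^ n : ℕ) : ℤ) = ((9 + y ^ 2 : ℕ) : ℤ) := by
        exact_mod_cast congrArg (Nat.cast : ℕ → ℤ) h
      push_cast at hc; linarith
    rcases rep 2 ii (by norm_num) base2 n hn (y:ℤ) 3 hco hz with
      ⟨h1, h2⟩ | ⟨h1, h2⟩
    · have h2' : (ii * zt ^ n).im.natAbs = 3 := by simpa using h2.symm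
      have him : (ii * zt ^ n).im = 3 ∨ (ii * zt ^ n).im = -3 := by
        rcases Int.natAbs_eq_iff.1 h2' with h' | h'
        · left; omega
        · right; omega
      rcases Lvi_B n him with rfl | rfl
      · left
        rw [wv1] at h1
        simp only [] at h1
        have : y = 1 := by omega
        simp [this]
      · right
        rw [wv5] at h1
        simp only [] at h1
        have : y = 79 := by omega
        simp [this]
    · have h2' : (ii * zt ^ n).re.natAbs = 3 := by simpa using h2.symm
      have hre : (ii * zt ^ n).re = 3 ∨ (ii * zt ^ n).re = -3 := by
        rcases Int.natAbs_eq_iff.1 h2' with h' | h'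
        · left; omega
        · right; omega
      exact (Lvi_A n hre).elim
  · -- (vi) backward
    intro h
    rcases h with h | h <;> simp only [Prod.mk.injEq] at h <;> obtain ⟨rfl, rfl⟩ := h <;>
      norm_num
end

section
/- Let n be a square-free positive integer and let f(x, y, z) = 3x² + 25y² + 25z² − 10xy − 10xz. Then for every prime p there exist p-adic integers x, y, z ∈ ℤ_p with f(x, y, z) = n if and only if n ≢ 7 (mod 8) and n ≡ 2 or 3 (mod 5). -/
open Polynomial

lemma norm_eq_pow {p : ℕ} [hp : Fact p.Prime] {k : ℤ} {m : ℕ}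
    (h2 : (p:ℤ)^m ∣ k) (h3 : ¬ (p:ℤ)^(m+1) ∣ k) :
    ‖(k : ℤ_[p])‖ = (p:ℝ) ^ (-(m:ℤ)) := by
  obtain ⟨u, rfl⟩ := h2
  have hu : ¬ (p:ℤ) ∣ u := fun ⟨v, hv⟩ => h3 ⟨v, by rw [hv]; ring⟩
  have hu1 : ‖(u : ℤ_[p])‖ = 1 := by
    have hle := PadicInt.norm_le_one (u : ℤ_[p])
    have := (PadicInt.norm_int_lt_one_iff_dvd (p := p) u).not.mpr hu
    push_neg at this
    linarith
  push_cast
  rw [norm_mul, PadicInt.norm_p_pow, hu1, mul_one]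

lemma hensel_x {p : ℕ} [hp : Fact p.Prime] (n : ℕ) (m : ℕ) (a b c : ℤ)
    (h1 : (p:ℤ)^(2*m+1) ∣ (3*a^2+25*b^2+25*c^2-10*a*b-10*a*c - n))
    (h2 : (p:ℤ)^m ∣ (6*a-10*b-10*c))
    (h3 : ¬ (p:ℤ)^(m+1) ∣ (6*a-10*b-10*c)) :
    ∃ x y z : ℤ_[p], 3*x^2+25*y^2+25*z^2-10*x*y-10*x*z = (n:ℤ_[p]) := by
  set k1 : ℤ_[p] := -(10*(b:ℤ_[p])+10*c) with hk1
  set k0 : ℤ_[p] := 25*(b:ℤ_[p])^2+25*c^2 - n with hk0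
  set F : Polynomial ℤ_[p] := C 3 * X^2 + C k1 * X + C k0 with hF
  have hev : ∀ t : ℤ_[p], F.eval t = 3*t^2+25*b^2+25*c^2-10*t*b-10*t*c - n := by
    intro t; simp [hF, hk1, hk0]; ring
  have hdev : F.derivative.eval (a : ℤ_[p]) = ((6*a-10*b-10*c : ℤ) : ℤ_[p]) := by
    simp [hF, hk1]; push_cast; ring
  have hFa : F.eval (a : ℤ_[p]) = ((3*a^2+25*b^2+25*c^2-10*a*b-10*a*c - n : ℤ) : ℤ_[p]) := by
    rw [hev]; push_cast; ring
  have hnorm : ‖F.eval (a : ℤ_[p])‖ < ‖F.derivative.eval (a : ℤ_[p])‖ ^ 2 := by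
    rw [hFa, hdev, norm_eq_pow h2 h3]
    calc ‖((3*a^2+25*b^2+25*c^2-10*a*b-10*a*c - n : ℤ) : ℤ_[p])‖
        ≤ (p:ℝ) ^ (-(2*m+1 : ℕ) : ℤ) := PadicInt.norm_int_le_pow_iff_dvd.mpr h1
      _ < ((p:ℝ) ^ (-(m:ℤ)))^2 := by
          rw [← zpow_natCast ((p:ℝ) ^ (-(m:ℤ))) 2, ← zpow_mul]
          apply zpow_lt_zpow_right₀
          · exact_mod_cast hp.out.one_lt
          · push_cast; omega
  obtain ⟨x, hx, -⟩ := hensels_lemma hnorm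
  refine ⟨x, b, c, ?_⟩
  rw [coe_aeval_eq_eval, hev] at hx
  linear_combination hx

lemma hensel_y {p : ℕ} [hp : Fact p.Prime] (n : ℕ) (m : ℕ) (a b c : ℤ)
    (h1 : (p:ℤ)^(2*m+1) ∣ (3*a^2+25*b^2+25*c^2-10*a*b-10*a*c - n))
    (h2 : (p:ℤ)^m ∣ (50*b-10*a))
    (h3 : ¬ (p:ℤ)^(m+1) ∣ (50*b-10*a)) :
    ∃ x y z : ℤ_[p], 3*x^2+25*y^2+25*z^2-10*x*y-10*x*z = (n:ℤ_[p]) := by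
  set k1 : ℤ_[p] := -(10*(a:ℤ_[p])) with hk1
  set k0 : ℤ_[p] := 3*(a:ℤ_[p])^2+25*c^2-10*a*c - n with hk0
  set F : Polynomial ℤ_[p] := C 25 * X^2 + C k1 * X + C k0 with hF
  have hev : ∀ t : ℤ_[p], F.eval t = 3*a^2+25*t^2+25*c^2-10*a*t-10*a*c - n := by
    intro t; simp [hF, hk1, hk0]; ring
  have hdev : F.derivative.eval (b : ℤ_[p]) = ((50*b-10*a : ℤ) : ℤ_[p]) := by
    simp [hF, hk1]; push_cast; ring
  have hFa : F.eval (b : ℤ_[p]) = ((3*a^2+25*b^2+25*c^2-10*a*b-10*a*c - n : ℤ) : ℤ_[p]) := by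
    rw [hev]; push_cast; ring
  have hnorm : ‖F.eval (b : ℤ_[p])‖ < ‖F.derivative.eval (b : ℤ_[p])‖ ^ 2 := by
    rw [hFa, hdev, norm_eq_pow h2 h3]
    calc ‖((3*a^2+25*b^2+25*c^2-10*a*b-10*a*c - n : ℤ) : ℤ_[p])‖
        ≤ (p:ℝ) ^ (-(2*m+1 : ℕ) : ℤ) := PadicInt.norm_int_le_pow_iff_dvd.mpr h1
      _ < ((p:ℝ) ^ (-(m:ℤ)))^2 := by
          rw [← zpow_natCast ((p:ℝ) ^ (-(m:ℤ))) 2, ← zpow_mul]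
          apply zpow_lt_zpow_right₀
          · exact_mod_cast hp.out.one_lt
          · push_cast; omega
  obtain ⟨y, hy, -⟩ := hensels_lemma hnorm
  refine ⟨a, y, c, ?_⟩
  rw [coe_aeval_eq_eval, hev] at hy
  linear_combination hy

set_option maxRecDepth 100000 in
lemma dec16 : ∀ x y z : ZMod (2^4),
    3*x^2+25*y^2+25*z^2-10*x*y-10*x*z ≠ 7 ∧ 3*x^2+25*y^2+25*z^2-10*x*y-10*x*z ≠ 15 := by decide

set_option maxRecDepth 100000 in
lemma dec25 : ∀ x y z : ZMod (5^2),
    (3*x^2+25*y^2+25*z^2-10*x*y-10*x*z).val % 5 = 2 ∨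
    (3*x^2+25*y^2+25*z^2-10*x*y-10*x*z).val % 5 = 3 ∨
    3*x^2+25*y^2+25*z^2-10*x*y-10*x*z = 0 := by decide

/-- A square-free positive integer `n` is represented by
`f(x,y,z) = 3x² + 25y² + 25z² − 10xy − 10xz` over `ℤ_p` for every prime `p` iff
`n ≢ 7 (mod 8)` and `n ≡ 2` or `3 (mod 5)`. -/
theorem stmt_9 (n : ℕ) (hn : 0 < n) (hsf : Squarefree n) :
    (∀ (p : ℕ) [Fact p.Prime], ∃ x y z : ℤ_[p],
        3 * x ^ 2 + 25 * y ^ 2 + 25 * z ^ 2 - 10 * x * y - 10 * x * z = (n : ℤ_[p])) ↔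
    (n % 8 ≠ 7 ∧ (n % 5 = 2 ∨ n % 5 = 3)) := by
  constructor
  · intro h
    constructor
    · intro h7
      haveI : Fact (Nat.Prime 2) := ⟨Nat.prime_two⟩
      obtain ⟨x, y, z, hxyz⟩ := h 2
      have e := congrArg (PadicInt.toZModPow (p := 2) 4) hxyz
      simp only [map_add, map_sub, map_mul, map_pow, map_ofNat, map_natCast] at e
      have hmod : (n : ZMod (2^4)) = ((n % 16 : ℕ) : ZMod (2^4)) :=
        (ZMod.natCast_mod n 16).symm
      have h16 : n % 16 = 7 ∨ n % 16 = 15 := by omega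
      rcases h16 with h16 | h16 <;> rw [hmod, h16] at e
      · exact (dec16 _ _ _).1 (by exact_mod_cast e)
      · exact (dec16 _ _ _).2 (by exact_mod_cast e)
    · haveI : Fact (Nat.Prime 5) := ⟨by norm_num⟩
      obtain ⟨x, y, z, hxyz⟩ := h 5
      have e := congrArg (PadicInt.toZModPow (p := 5) 2) hxyz
      simp only [map_add, map_sub, map_mul, map_pow, map_ofNat, map_natCast] at e
      rcases dec25 (PadicInt.toZModPow 2 x) (PadicInt.toZModPow 2 y) (PadicInt.toZModPow 2 z)
        with hv | hv | hv
      · rw [e, ZMod.val_natCast] at hv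
        left; omega
      · rw [e, ZMod.val_natCast] at hv
        right; omega
      · rw [e] at hv
        have h25 : (5^2 : ℕ) ∣ n := (ZMod.natCast_eq_zero_iff n (5^2)).mp hv
        have := hsf 5 (by simpa [pow_two] using h25)
        simp [Nat.isUnit_iff] at this
  · rintro ⟨h8, h5⟩ p hp
    have h4 : ¬ (4 ∣ n) := fun hd => by
      have := hsf 2 (by omega)
      simp [Nat.isUnit_iff] at this
    by_cases hp2 : p = 2
    · subst hp2
      have hcase : n % 8 = 1 ∨ n % 8 = 2 ∨ n % 8 = 3 ∨ n % 8 = 5 ∨ n % 8 = 6 := by omega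
      rcases hcase with hr | hr | hr | hr | hr
      · exact hensel_x n 1 3 1 1 (by norm_num; omega) (by norm_num) (by norm_num)
      · exact hensel_y n 1 0 1 1 (by norm_num; omega) (by norm_num) (by norm_num)
      · exact hensel_x n 1 1 0 0 (by norm_num; omega) (by norm_num) (by norm_num)
      · exact hensel_x n 1 0 1 2 (by norm_num; omega) (by norm_num) (by norm_num)
      · exact hensel_y n 1 2 1 1 (by norm_num; omega) (by norm_num) (by norm_num)
    · by_cases hp3 : p = 3
      · subst hp3
        have hcase : n % 3 = 0 ∨ n % 3 = 1 ∨ n % 3 = 2 := by omega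
        rcases hcase with hr | hr | hr
        · exact hensel_x n 0 1 1 0 (by norm_num; omega) (by norm_num) (by norm_num)
        · exact hensel_x n 0 0 1 0 (by norm_num; omega) (by norm_num) (by norm_num)
        · exact hensel_x n 0 0 1 1 (by norm_num; omega) (by norm_num) (by norm_num)
      · by_cases hp5 : p = 5
        · subst hp5
          rcases h5 with hr | hr
          · exact hensel_x n 0 2 0 0 (by norm_num; omega) (by norm_num) (by norm_num)
          · exact hensel_x n 0 1 0 0 (by norm_num; omega) (by norm_num) (by norm_num)
        ·
          -- nonvanishing of small numbers in ZMod p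
          have hnz : ∀ q : ℕ, Nat.Prime q → p ≠ q → ((q:ℕ) : ZMod p) ≠ 0 := by
            intro q hq hpq h0
            exact hpq ((Nat.prime_dvd_prime_iff_eq hp.out hq).mp
              ((ZMod.natCast_eq_zero_iff q p).mp h0))
          have h2ne : (2 : ZMod p) ≠ 0 := by exact_mod_cast hnz 2 Nat.prime_two hp2
          have h3ne : (3 : ZMod p) ≠ 0 := by exact_mod_cast hnz 3 Nat.prime_three hp3
          have h5ne : (5 : ZMod p) ≠ 0 := by exact_mod_cast hnz 5 (by norm_num) hp5
          have h50ne : (50 : ZMod p) ≠ 0 := by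
            have : (50 : ZMod p) = 2 * 5 * 5 := by norm_num
            rw [this]
            exact mul_ne_zero (mul_ne_zero h2ne h5ne) h5ne
          have hcard : Fintype.card (ZMod p) % 2 = 1 := by
            rw [ZMod.card p]
            exact Nat.odd_iff.mp (hp.out.odd_of_ne_two hp2)
          -- solve w^2 + 50(b^2 - b + 1) = 3n in ZMod p
          obtain ⟨w, b, hwb⟩ := FiniteField.exists_root_sum_quadratic
            (f := X^2) (g := C 50 * X^2 + C (-50) * X + C (50 - 3*(n : ZMod p)))
            (degree_X_pow 2) (degree_quadratic h50ne) hcard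
          simp only [eval_add, eval_mul, eval_pow, eval_X, eval_C, eval_sub, eval_neg] at hwb
          set a : ZMod p := (3 : ZMod p)⁻¹ * (w + 5*b + 5) with ha
          have h3a : (3 : ZMod p) * a = w + 5*b + 5 := by
            rw [ha, ← mul_assoc, mul_inv_cancel₀ h3ne, one_mul]
          have hfn : 3*a^2+25*b^2+25-10*a*b-10*a = (n : ZMod p) := by
            apply mul_left_cancel₀ h3ne
            linear_combination (3*a + w - 5*b - 5) * h3a + hwb
          have key : ∀ t : ZMod p, ((t.val : ℤ) : ZMod p) = t := by
            intro t
            have : ((t.val : ℤ) : ZMod p) = ((t.val : ℕ) : ZMod p) := by push_cast; ring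
            rw [this, ZMod.natCast_val, ZMod.cast_id]
          by_cases hw : w = 0
          · by_cases hdy : 50*b - 10*a = 0
            · -- z-direction: 50 - 10a ≠ 0
              have hdz : (50 : ZMod p) - 10*a ≠ 0 := by
                intro h0
                exact h50ne (by linear_combination 10*h3a + 10*hw + hdy + 2*h0)
              refine hensel_y n 0 (a.val : ℤ) 1 (b.val : ℤ) ?_ (one_dvd _) ?_
              · rw [show 2*0+1 = 1 from rfl, pow_one, ← ZMod.intCast_zmod_eq_zero_iff_dvd]
                push_cast [key]
                linear_combination hfn
              · rw [show (0:ℕ)+1 = 1 from rfl, pow_one, ← ZMod.intCast_zmod_eq_zero_iff_dvd]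
                push_cast [key]
                intro h0
                exact hdz (by linear_combination h0)
            · refine hensel_y n 0 (a.val : ℤ) (b.val : ℤ) 1 ?_ (one_dvd _) ?_
              · rw [show 2*0+1 = 1 from rfl, pow_one, ← ZMod.intCast_zmod_eq_zero_iff_dvd]
                push_cast [key]
                linear_combination hfn
              · rw [show (0:ℕ)+1 = 1 from rfl, pow_one, ← ZMod.intCast_zmod_eq_zero_iff_dvd]
                push_cast [key]
                intro h0
                exact hdy (by linear_combination h0)
          · refine hensel_x n 0 (a.val : ℤ) (b.val : ℤ) 1 ?_ (one_dvd _) ?_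
            · rw [show 2*0+1 = 1 from rfl, pow_one, ← ZMod.intCast_zmod_eq_zero_iff_dvd]
              push_cast [key]
              linear_combination hfn
            · rw [show (0:ℕ)+1 = 1 from rfl, pow_one, ← ZMod.intCast_zmod_eq_zero_iff_dvd]
              push_cast [key]
              intro h0
              have hw0 : (2 : ZMod p) * w = 0 := by linear_combination h0 - 2*h3a
              exact hw (by
                rcases mul_eq_zero.mp hw0 with h | h
                · exact absurd h h2ne
                · exact h)
end

section
/- Let n be a positive integer with n ≡ 2 (mod 5). If there exist integers a, b, c with n = 3a² + 25b² + 25c² − 10ab − 10ac, then n is a sum of three nonunit squares, i.e., there exist integers x, y, z with n = x² + y² + z² and x² ≠ 1, y² ≠ 1, z² ≠ 1. -/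
/-- If `n ≡ 2 (mod 5)` is represented by `f(x,y,z) = 3x² + 25y² + 25z² − 10xy − 10xz`
over `ℤ`, then `n` is a sum of three nonunit squares. -/
theorem stmt_10 (n : ℕ) (hn : 0 < n) (h5 : n % 5 = 2)
    (hf : ∃ a b c : ℤ,
      (n : ℤ) = 3 * a ^ 2 + 25 * b ^ 2 + 25 * c ^ 2 - 10 * a * b - 10 * a * c) :
    ∃ x y z : ℤ, (n : ℤ) = x ^ 2 + y ^ 2 + z ^ 2 ∧
      x ^ 2 ≠ 1 ∧ y ^ 2 ≠ 1 ∧ z ^ 2 ≠ 1 := by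
  obtain ⟨a, b, c, h⟩ := hf
  have hn5 : (n : ZMod 5) = 2 := by
    have := (ZMod.natCast_mod n 5).symm
    rw [h5] at this
    simpa using this
  have hcast : (n : ZMod 5) = 3 * (a : ZMod 5) ^ 2 := by
    have := congrArg (fun t : ℤ => (t : ZMod 5)) h
    push_cast at this
    rw [this]
    have h25 : (25 : ZMod 5) = 0 := by decide
    have h10 : (10 : ZMod 5) = 0 := by decide
    rw [h25, h10]
    ring
  have hmain : ¬ ((a : ZMod 5) ^ 2 = 1) := by
    intro ha
    rw [ha, hn5] at hcast
    exact absurd hcast (by decide)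
  refine ⟨a, a - 5 * b, a - 5 * c, by linear_combination h, ?_, ?_, ?_⟩
  · intro ha
    apply hmain
    have := congrArg (fun t : ℤ => (t : ZMod 5)) ha
    push_cast at this
    simpa using this
  · intro ha
    apply hmain
    have := congrArg (fun t : ℤ => (t : ZMod 5)) ha
    push_cast at this
    have h5' : (5 : ZMod 5) = 0 := by decide
    rw [h5'] at this
    simpa using this
  · intro ha
    apply hmain
    have := congrArg (fun t : ℤ => (t : ZMod 5)) ha
    push_cast at this
    have h5' : (5 : ZMod 5) = 0 := by decide
    rw [h5'] at this
    simpa using this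
end

section
/- Let n be a positive integer with n ≡ 3 (mod 5). If there exist integers a, b, c with n = 2a² + 25b² + 25c² − 10ab, then n is a sum of three nonunit squares, i.e., there exist integers x, y, z with n = x² + y² + z² and x² ≠ 1, y² ≠ 1, z² ≠ 1. -/
/-- If `n ≡ 3 (mod 5)` is represented by `g(x,y,z) = 2x² + 25y² + 25z² − 10xy`
over `ℤ`, then `n` is a sum of three nonunit squares. -/
theorem stmt_11 (n : ℕ) (hn : 0 < n) (h5 : n % 5 = 3)
    (hg : ∃ a b c : ℤ,
      (n : ℤ) = 2 * a ^ 2 + 25 * b ^ 2 + 25 * c ^ 2 - 10 * a * b) :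
    ∃ x y z : ℤ, (n : ℤ) = x ^ 2 + y ^ 2 + z ^ 2 ∧
      x ^ 2 ≠ 1 ∧ y ^ 2 ≠ 1 ∧ z ^ 2 ≠ 1 := by
  obtain ⟨a, b, c, h⟩ := hg
  have hn5 : (n : ZMod 5) = 3 := by
    rw [← ZMod.natCast_mod, h5]; rfl
  have hcast := congrArg (Int.cast : ℤ → ZMod 5) h
  push_cast at hcast
  rw [hn5] at hcast
  have e25 : (25 : ZMod 5) = 0 := by decide
  have e10 : (10 : ZMod 5) = 0 := by decide
  rw [e25, e10] at hcast
  simp only [zero_mul, add_zero, sub_zero, mul_zero] at hcast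
  -- hcast : 3 = 2 * (a : ZMod 5) ^ 2
  have key : 2 * (a : ZMod 5) ^ 2 = 3 := hcast.symm
  refine ⟨a, a - 5 * b, 5 * c, by rw [h]; ring, ?_, ?_, ?_⟩
  · intro ha
    have h' := congrArg (Int.cast : ℤ → ZMod 5) ha
    push_cast at h'
    rw [h'] at key
    exact absurd key (by decide)
  · intro hy
    have h' := congrArg (Int.cast : ℤ → ZMod 5) hy
    push_cast at h'
    have e5 : (5 : ZMod 5) = 0 := by decide
    rw [e5] at h'
    simp only [zero_mul, sub_zero] at h'
    rw [h'] at key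
    exact absurd key (by decide)
  · intro hz
    have h1 : 25 * c ^ 2 = 1 := by linear_combination hz
    have h2 : 0 ≤ c ^ 2 := sq_nonneg c
    generalize c ^ 2 = d at h1 h2
    omega
end

section
/- Let m be a positive integer with m ≠ 3, and suppose m = a² + b² + c² for integers a, b, c with abc not divisible by 3. Then there exist integers A, B, C such that 9m = A² + B² + C², the product ABC is not divisible by 3, and A² ≠ 1, B² ≠ 1, C² ≠ 1. -/
private lemma good_aux (x y z A B C : ℤ) (hA : A % 3 = 2) (hB : B % 3 = 2) (hC : C % 3 = 2)
    (hA1 : A ≠ -1) (hB1 : B ≠ -1) (hC1 : C ≠ -1)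
    (hsum : 9 * (x ^ 2 + y ^ 2 + z ^ 2) = A ^ 2 + B ^ 2 + C ^ 2) :
    ∃ A B C : ℤ, 9 * (x ^ 2 + y ^ 2 + z ^ 2) = A ^ 2 + B ^ 2 + C ^ 2 ∧
      ¬((3 : ℤ) ∣ A * B * C) ∧ A ^ 2 ≠ 1 ∧ B ^ 2 ≠ 1 ∧ C ^ 2 ≠ 1 := by
  have hp : Prime (3 : ℤ) := by norm_num
  have sq1 : ∀ t : ℤ, t % 3 = 2 → t ≠ -1 → t ^ 2 ≠ 1 := by
    intro t ht ht1 h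
    have h' : (t - 1) * (t + 1) = 0 := by ring_nf; linarith
    rcases mul_eq_zero.mp h' with h'' | h'' <;> omega
  refine ⟨A, B, C, hsum, ?_, sq1 A hA hA1, sq1 B hB hB1, sq1 C hC hC1⟩
  intro hdvd
  rcases (hp.dvd_mul.mp hdvd) with h | h
  · rcases (hp.dvd_mul.mp h) with h' | h' <;> omega
  · omega

private lemma key_aux (x y z : ℤ) (hx : x % 3 = 1) (hy : y % 3 = 1) (hz : z % 3 = 1)
    (h3 : x ^ 2 + y ^ 2 + z ^ 2 ≠ 3) :
    ∃ A B C : ℤ, 9 * (x ^ 2 + y ^ 2 + z ^ 2) = A ^ 2 + B ^ 2 + C ^ 2 ∧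
      ¬((3 : ℤ) ∣ A * B * C) ∧ A ^ 2 ≠ 1 ∧ B ^ 2 ≠ 1 ∧ C ^ 2 ≠ 1 := by
  by_cases hc : 2*x+2*y+z = -1 ∨ -x+2*y-2*z = -1 ∨ 2*x-y-2*z = -1
  · by_cases ha : -2*x+2*y-z = -1 ∨ x+2*y+2*z = -1 ∨ -2*x-y+2*z = -1
    · by_cases hb : 2*x-2*y-z = -1 ∨ -x-2*y+2*z = -1 ∨ 2*x+y+2*z = -1
      · exfalso
        apply h3
        rcases hc with hc | hc | hc <;> rcases ha with ha | ha | ha <;>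
          rcases hb with hb | hb | hb <;>
        · have hxyz : x = 1 ∧ y = 1 ∧ z = 1 := by omega
          rw [hxyz.1, hxyz.2.1, hxyz.2.2]; norm_num
      · push_neg at hb
        exact good_aux x y z (2*x-2*y-z) (-x-2*y+2*z) (2*x+y+2*z)
          (by omega) (by omega) (by omega) hb.1 hb.2.1 hb.2.2 (by ring)
    · push_neg at ha
      exact good_aux x y z (-2*x+2*y-z) (x+2*y+2*z) (-2*x-y+2*z)
        (by omega) (by omega) (by omega) ha.1 ha.2.1 ha.2.2 (by ring)
  · push_neg at hc
    exact good_aux x y z (2*x+2*y+z) (-x+2*y-2*z) (2*x-y-2*z)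
      (by omega) (by omega) (by omega) hc.1 hc.2.1 hc.2.2 (by ring)

/-- If `m ≠ 3` is a positive integer with `m = a² + b² + c²` and `3 ∤ abc`, then
`9m = A² + B² + C²` for integers with `3 ∤ ABC` and `A², B², C² ≠ 1`. -/
theorem stmt_14 (m : ℕ) (hm : 0 < m) (hm3 : m ≠ 3) (a b c : ℤ)
    (habc : (m : ℤ) = a ^ 2 + b ^ 2 + c ^ 2) (h3 : ¬((3 : ℤ) ∣ a * b * c)) :
    ∃ A B C : ℤ, (9 * m : ℤ) = A ^ 2 + B ^ 2 + C ^ 2 ∧ ¬((3 : ℤ) ∣ A * B * C) ∧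
      A ^ 2 ≠ 1 ∧ B ^ 2 ≠ 1 ∧ C ^ 2 ≠ 1 := by
  have h3a : ¬ (3 : ℤ) ∣ a := fun h => h3 ((h.mul_right b).mul_right c)
  have h3b : ¬ (3 : ℤ) ∣ b := fun h => h3 ((h.mul_left a).mul_right c)
  have h3c : ¬ (3 : ℤ) ∣ c := fun h => h3 (h.mul_left (a * b))
  set x : ℤ := if a % 3 = 1 then a else -a with hxdef
  set y : ℤ := if b % 3 = 1 then b else -b with hydef
  set z : ℤ := if c % 3 = 1 then c else -c with hzdef
  have hx : x % 3 = 1 := by rw [hxdef]; split_ifs with h <;> omega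
  have hy : y % 3 = 1 := by rw [hydef]; split_ifs with h <;> omega
  have hz : z % 3 = 1 := by rw [hzdef]; split_ifs with h <;> omega
  have hx2 : x ^ 2 = a ^ 2 := by rw [hxdef]; split_ifs <;> ring
  have hy2 : y ^ 2 = b ^ 2 := by rw [hydef]; split_ifs <;> ring
  have hz2 : z ^ 2 = c ^ 2 := by rw [hzdef]; split_ifs <;> ring
  have hsum : x ^ 2 + y ^ 2 + z ^ 2 = (m : ℤ) := by rw [hx2, hy2, hz2, habc]
  have hne : x ^ 2 + y ^ 2 + z ^ 2 ≠ 3 := by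
    rw [hsum]; exact_mod_cast fun h => hm3 (by exact_mod_cast h)
  obtain ⟨A, B, C, hABC, hd, hA, hB, hC⟩ := key_aux x y z hx hy hz hne
  exact ⟨A, B, C, by rw [← hsum]; exact_mod_cast hABC, hd, hA, hB, hC⟩
end

section
/- Let m be a positive integer that can be written as a sum of three squares of integers, m = a² + b² + c². If m ∉ {1, 2, 3, 14}, then there exist integers x, y, z such that 9m = x² + y² + z², the product xyz is not divisible by 3, and x² ≠ 1, y² ≠ 1, z² ≠ 1. -/
set_option maxHeartbeats 1600000

private lemma sort3 (P : ℤ → Prop) (hneg : ∀ x, P x → P (-x)) (a b c : ℤ)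
    (ha : P a) (hb : P b) (hc : P c) :
    ∃ A B C : ℤ, 0 ≤ C ∧ C ≤ B ∧ B ≤ A ∧ A ^ 2 + B ^ 2 + C ^ 2 = a ^ 2 + b ^ 2 + c ^ 2 ∧
      P A ∧ P B ∧ P C := by
  obtain ⟨a', ha0, ha2, haP⟩ : ∃ a', 0 ≤ a' ∧ a' ^ 2 = a ^ 2 ∧ P a' := by
    rcases le_total 0 a with h | h
    · exact ⟨a, h, rfl, ha⟩
    · exact ⟨-a, by omega, by ring, hneg a ha⟩
  obtain ⟨b', hb0, hb2, hbP⟩ : ∃ b', 0 ≤ b' ∧ b' ^ 2 = b ^ 2 ∧ P b' := by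
    rcases le_total 0 b with h | h
    · exact ⟨b, h, rfl, hb⟩
    · exact ⟨-b, by omega, by ring, hneg b hb⟩
  obtain ⟨c', hc0, hc2, hcP⟩ : ∃ c', 0 ≤ c' ∧ c' ^ 2 = c ^ 2 ∧ P c' := by
    rcases le_total 0 c with h | h
    · exact ⟨c, h, rfl, hc⟩
    · exact ⟨-c, by omega, by ring, hneg c hc⟩
  rcases le_total a' b' with h1 | h1 <;> rcases le_total b' c' with h2 | h2 <;>
    rcases le_total a' c' with h3 | h3
  · exact ⟨c', b', a', ha0, h1, h2, by rw [ha2, hb2, hc2] <;> ring, hcP, hbP, haP⟩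
  · exact ⟨c', b', a', ha0, h1, h2, by rw [ha2, hb2, hc2] <;> ring, hcP, hbP, haP⟩
  · exact ⟨b', c', a', ha0, by omega, by omega, by rw [ha2, hb2, hc2] <;> ring, hbP, hcP, haP⟩
  · exact ⟨b', a', c', hc0, by omega, by omega, by rw [ha2, hb2, hc2] <;> ring, hbP, haP, hcP⟩
  · exact ⟨c', a', b', hb0, by omega, by omega, by rw [ha2, hb2, hc2] <;> ring, hcP, haP, hbP⟩
  · exact ⟨a', c', b', hb0, by omega, by omega, by rw [ha2, hb2, hc2] <;> ring, haP, hcP, hbP⟩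
  · exact ⟨a', b', c', hc0, h2, h1, by rw [ha2, hb2, hc2] <;> ring, haP, hbP, hcP⟩
  · exact ⟨a', b', c', hc0, h2, h1, by rw [ha2, hb2, hc2] <;> ring, haP, hbP, hcP⟩

/-- The core construction: from an ordered representation which is not entirely
divisible by 3 and not one of the four exceptional triples, produce a good
representation of `9(a²+b²+c²)`. -/
private lemma core (a b c : ℤ) (h0 : 0 ≤ c) (hcb : c ≤ b) (hba : b ≤ a)
    (hnd : ¬((3 : ℤ) ∣ a ∧ (3 : ℤ) ∣ b ∧ (3 : ℤ) ∣ c))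
    (e1 : ¬(a = 1 ∧ b = 0 ∧ c = 0)) (e2 : ¬(a = 1 ∧ b = 1 ∧ c = 0))
    (e3 : ¬(a = 1 ∧ b = 1 ∧ c = 1)) (e4 : ¬(a = 3 ∧ b = 2 ∧ c = 1)) :
    ∃ x y z : ℤ, x ^ 2 + y ^ 2 + z ^ 2 = 9 * (a ^ 2 + b ^ 2 + c ^ 2) ∧
      ¬((3 : ℤ) ∣ x) ∧ ¬((3 : ℤ) ∣ y) ∧ ¬((3 : ℤ) ∣ z) ∧
      x ≠ 1 ∧ x ≠ -1 ∧ y ≠ 1 ∧ y ≠ -1 ∧ z ≠ 1 ∧ z ≠ -1 := by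
  have ha2 : 2 ≤ a := by
    rcases lt_or_ge a 2 with h | h
    · exfalso
      have h01 : (a = 0 ∧ b = 0 ∧ c = 0) ∨ (a = 1 ∧ b = 0 ∧ c = 0) ∨
          (a = 1 ∧ b = 1 ∧ c = 0) ∨ (a = 1 ∧ b = 1 ∧ c = 1) := by omega
      rcases h01 with ⟨ha, hb, hc⟩ | h' | h' | h'
      · subst ha; subst hb; subst hc
        exact hnd ⟨dvd_zero 3, dvd_zero 3, dvd_zero 3⟩
      · exact e1 h'
      · exact e2 h'
      · exact e3 h'
    · exact h
  clear e1 e2 e3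
  by_cases h4 : (3 : ℤ) ∣ (a + b + c)
  · -- Branch P : 3 ∣ a+b+c
    by_cases h1 : (3 : ℤ) ∣ (a - b - c)
    · -- 3 ∣ a, 3 ∣ b+c, 3 ∤ b, 3 ∤ c
      have h3a : (3 : ℤ) ∣ a := by omega
      have h3bc : (3 : ℤ) ∣ (b + c) := by omega
      have hnb : ¬((3 : ℤ) ∣ b) := by omega
      have hnc : ¬((3 : ℤ) ∣ c) := by omega
      clear hnd h4 h1
      obtain ⟨a', rfl⟩ := h3a
      obtain ⟨s, hs⟩ := h3bc
      have hbs : b = 3 * s - c := by omega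
      subst hbs
      by_cases hs5 : 2 * (3 * a') - 2 * (3 * s - c) - c ≤ -2 ∨
          2 ≤ 2 * (3 * a') - 2 * (3 * s - c) - c
      · exact ⟨3 * a' + 2 * (3 * s - c) - 2 * c, 2 * (3 * a') - 2 * (3 * s - c) - c,
          2 * (3 * a') + (3 * s - c) + 2 * c, by ring,
          by omega, by omega, by omega, by omega, by omega, by omega, by omega,
          by omega, by omega⟩
      · by_cases hsB : 2 * (3 * a') - (3 * s - c) - 2 * c ≤ -2 ∨
            2 ≤ 2 * (3 * a') - (3 * s - c) - 2 * c
        · by_cases hsA : 3 * a' - 2 * (3 * s - c) + 2 * c ≤ -2 ∨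
              2 ≤ 3 * a' - 2 * (3 * s - c) + 2 * c
          · exact ⟨3 * a' - 2 * (3 * s - c) + 2 * c, 2 * (3 * a') - (3 * s - c) - 2 * c,
              2 * (3 * a') + 2 * (3 * s - c) + c, by ring,
              by omega, by omega, by omega, by omega, by omega, by omega, by omega,
              by omega, by omega⟩
          · -- family IIb : |a-2b+2c| ≤ 1
            by_cases he : 3 * a' - 2 * (3 * s - c) + 2 * c = 1
            · obtain ⟨r, hr⟩ : ∃ r, c = 6 * r + 1 := ⟨(c - 1) / 6, by omega⟩
              have hb : s = 7 * r + 1 := by omega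
              have ha : a' = 6 * r + 1 := by omega
              subst ha hb hr
              have hr1 : 1 ≤ r := by
                rcases lt_or_ge r 1 with h | h
                · exfalso; exact e4 (by omega)
                · exact h
              clear e4 hsA hsB hs5 hnb hnc he
              by_cases hr3 : (3 : ℤ) ∣ (r + 1)
              · exact ⟨2 * r + 1, 19 * r + 2, 70 * r + 11, by ring,
                  by omega, by omega, by omega, by omega, by omega, by omega, by omega,
                  by omega, by omega⟩
              · exact ⟨38 * r + 5, 10 * r + 1, 61 * r + 10, by ring,
                  by omega, by omega, by omega, by omega, by omega, by omega, by omega,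
                  by omega, by omega⟩
            · clear e4
              have hs1v : 3 * a' - 2 * (3 * s - c) + 2 * c = -1 := by omega
              have hac : a' = c := by omega
              obtain ⟨r, hr⟩ : ∃ r, c = 6 * r + 5 := ⟨(c - 5) / 6, by omega⟩
              have hb : s = 7 * r + 6 := by omega
              have ha : a' = 6 * r + 5 := by omega
              have hr0 : 0 ≤ r := by omega
              subst ha hb hr
              clear hsA hsB hs5 hnb hnc he
              by_cases hr3 : (3 : ℤ) ∣ r
              · exact ⟨14 * r + 11, 35 * r + 29, 62 * r + 53, by ring,
                  by omega, by omega, by omega, by omega, by omega, by omega, by omega,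
                  by omega, by omega⟩
              · exact ⟨38 * r + 33, 10 * r + 9, 61 * r + 51, by ring,
                  by omega, by omega, by omega, by omega, by omega, by omega, by omega,
                  by omega, by omega⟩
        · -- family IIa : |2a-b-2c| ≤ 1
          clear e4
          obtain ⟨r, hr⟩ : ∃ r, c = 6 * r + 5 := ⟨(c - 5) / 6, by omega⟩
          have hb : s = 4 * r + 4 := by omega
          have ha : a' = 3 * r + 3 := by omega
          have hr0 : 0 ≤ r := by omega
          subst ha hb hr
          clear hsB hs5 hnb hnc
          by_cases hr3 : (3 : ℤ) ∣ (r - 1)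
          · exact ⟨11 * r + 15, 10 * r + 9, 34 * r + 33, by ring,
              by omega, by omega, by omega, by omega, by omega, by omega, by omega,
              by omega, by omega⟩
          · exact ⟨11 * r + 7, 10 * r + 11, 34 * r + 35, by ring,
              by omega, by omega, by omega, by omega, by omega, by omega, by omega,
              by omega, by omega⟩
    · -- 3 ∣ a+b+c, 3 ∤ a-b-c
      clear hnd e4
      by_cases hs4 : 2 ≤ 2 * a - 2 * b + c
      · exact ⟨a + 2 * b + 2 * c, 2 * a - 2 * b + c, 2 * a + b - 2 * c, by ring,
          by omega, by omega, by omega, by omega, by omega, by omega, by omega,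
          by omega, by omega⟩
      · -- forced : a = b, c = 1, a ≡ 1 (mod 3), a ≥ 4
        obtain ⟨q, hq⟩ := h4
        have hc1 : c = 1 := by omega
        have hab : a = b := by omega
        subst hc1; subst hab
        exact ⟨-a + 2, a - 2, 4 * a + 1, by ring,
          by omega, by omega, by omega, by omega, by omega, by omega, by omega,
          by omega, by omega⟩
  · -- Branch N : 3 ∤ a+b+c
    clear hnd e4
    by_cases hs2 : a - 2 * b - 2 * c ≤ -2 ∨ 2 ≤ a - 2 * b - 2 * c
    · exact ⟨a - 2 * b - 2 * c, 2 * a - b + 2 * c, 2 * a + 2 * b - c, by ring,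
        by omega, by omega, by omega, by omega, by omega, by omega, by omega,
        by omega, by omega⟩
    · by_cases h1 : (3 : ℤ) ∣ (a - b - c)
      · by_cases h2 : (3 : ℤ) ∣ (a - b + c)
        · -- 3 ∣ c, 3 ∣ a-b
          obtain ⟨p, hp⟩ := h1
          obtain ⟨q, hq⟩ := h2
          obtain ⟨k, hk⟩ : ∃ k, c = 3 * k := ⟨c - q + p, by omega⟩
          subst hk
          obtain ⟨j, hj⟩ : ∃ j, a = b + 3 * j := ⟨p + k, by omega⟩
          subst hj
          clear hp hq
          by_cases hc : k = 0
          · -- family I : c = 0, a = 2b ± 1, 3 ∣ a-b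
            subst hc
            have he : (b + 3 * j) - 2 * b = 1 ∨ (b + 3 * j) - 2 * b = -1 := by omega
            rcases he with he | he
            · have hb : b = 3 * j - 1 := by omega
              subst hb
              have ht1 : 1 ≤ j := by omega
              clear h4 hs2 he
              by_cases h3t : (3 : ℤ) ∣ j
              · exact ⟨7 * j - 1, 10 * j - 1, 16 * j - 4, by ring,
                  by omega, by omega, by omega, by omega, by omega, by omega, by omega,
                  by omega, by omega⟩
              · exact ⟨17 * j - 3, 4 * j, 10 * j - 3, by ring,
                  by omega, by omega, by omega, by omega, by omega, by omega, by omega,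
                  by omega, by omega⟩
            · have hb : b = 3 * j + 1 := by omega
              subst hb
              have ht1 : 1 ≤ j := by omega
              clear h4 hs2 he
              by_cases h3t : (3 : ℤ) ∣ j
              · exact ⟨7 * j + 1, 10 * j + 1, 16 * j + 4, by ring,
                  by omega, by omega, by omega, by omega, by omega, by omega, by omega,
                  by omega, by omega⟩
              · exact ⟨17 * j + 3, 4 * j, 10 * j + 3, by ring,
                  by omega, by omega, by omega, by omega, by omega, by omega, by omega,
                  by omega, by omega⟩
          · -- c ≥ 3
            exact ⟨(b + 3 * j) - 2 * b + 2 * (3 * k), 2 * (b + 3 * j) - b - 2 * (3 * k),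
              2 * (b + 3 * j) + 2 * b + 3 * k, by ring,
              by omega, by omega, by omega, by omega, by omega, by omega, by omega,
              by omega, by omega⟩
        · exact ⟨a + 2 * b - 2 * c, 2 * a - 2 * b - c, 2 * a + b + 2 * c, by ring,
            by omega, by omega, by omega, by omega, by omega, by omega, by omega,
            by omega, by omega⟩
      · exact ⟨a + 2 * b + 2 * c, 2 * a - 2 * b + c, 2 * a + b - 2 * c, by ring,
          by omega, by omega, by omega, by omega, by omega, by omega, by omega,
          by omega, by omega⟩

private lemma pack {N x y z : ℤ} (heq : x ^ 2 + y ^ 2 + z ^ 2 = N)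
    (hx : ¬((3 : ℤ) ∣ x)) (hy : ¬((3 : ℤ) ∣ y)) (hz : ¬((3 : ℤ) ∣ z))
    (hx1 : x ≠ 1) (hx2 : x ≠ -1) (hy1 : y ≠ 1) (hy2 : y ≠ -1)
    (hz1 : z ≠ 1) (hz2 : z ≠ -1) :
    N = x ^ 2 + y ^ 2 + z ^ 2 ∧ ¬((3 : ℤ) ∣ x * y * z) ∧
      x ^ 2 ≠ 1 ∧ y ^ 2 ≠ 1 ∧ z ^ 2 ≠ 1 := by
  refine ⟨heq.symm, ?_, ?_, ?_, ?_⟩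
  · intro h
    rcases (Int.prime_three.dvd_mul).mp h with h' | h'
    · rcases (Int.prime_three.dvd_mul).mp h' with h'' | h''
      · exact hx h''
      · exact hy h''
    · exact hz h'
  · intro h
    rcases mul_eq_zero.mp (show (x - 1) * (x + 1) = 0 by linear_combination h) with h' | h' <;>
      omega
  · intro h
    rcases mul_eq_zero.mp (show (y - 1) * (y + 1) = 0 by linear_combination h) with h' | h' <;>
      omega
  · intro h
    rcases mul_eq_zero.mp (show (z - 1) * (z + 1) = 0 by linear_combination h) with h' | h' <;>
      omega

/-- If `m ∉ {1, 2, 3, 14}` is a positive integer that is a sum of three squares, then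
`9m = x² + y² + z²` for integers with `3 ∤ xyz` and `x², y², z² ≠ 1`. -/
theorem stmt_15 (m : ℕ) (hm : 0 < m)
    (hS3 : ∃ a b c : ℤ, (m : ℤ) = a ^ 2 + b ^ 2 + c ^ 2)
    (hexc : m ∉ ({1, 2, 3, 14} : Set ℕ)) :
    ∃ x y z : ℤ, (9 * m : ℤ) = x ^ 2 + y ^ 2 + z ^ 2 ∧ ¬((3 : ℤ) ∣ x * y * z) ∧
      x ^ 2 ≠ 1 ∧ y ^ 2 ≠ 1 ∧ z ^ 2 ≠ 1 := by
  have key : ∀ n : ℕ, 0 < n → (∃ a b c : ℤ, (n : ℤ) = a ^ 2 + b ^ 2 + c ^ 2) →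
      n ≠ 1 → n ≠ 2 → n ≠ 3 → n ≠ 14 →
      ∃ x y z : ℤ, (9 * n : ℤ) = x ^ 2 + y ^ 2 + z ^ 2 ∧ ¬((3 : ℤ) ∣ x * y * z) ∧
        x ^ 2 ≠ 1 ∧ y ^ 2 ≠ 1 ∧ z ^ 2 ≠ 1 := by
    intro n
    induction n using Nat.strong_induction_on with
    | _ n IH =>
      intro hn hrep hn1 hn2 hn3 hn14
      obtain ⟨a, b, c, habc⟩ := hrep
      obtain ⟨A, B, C, hC0, hCB, hBA, hsum, -, -, -⟩ :=
        sort3 (fun _ => True) (fun _ _ => trivial) a b c trivial trivial trivial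
      have hsum' : (n : ℤ) = A ^ 2 + B ^ 2 + C ^ 2 := by rw [habc, ← hsum]
      by_cases hall : (3 : ℤ) ∣ A ∧ (3 : ℤ) ∣ B ∧ (3 : ℤ) ∣ C
      · -- descent
        obtain ⟨⟨A', hA'⟩, ⟨B', hB'⟩, ⟨C', hC'⟩⟩ := hall
        have h9n : (n : ℤ) = 9 * (A' ^ 2 + B' ^ 2 + C' ^ 2) := by
          rw [hsum', hA', hB', hC']; ring
        have h9 : (9 : ℕ) ∣ n := by
          have h : ((9 : ℕ) : ℤ) ∣ (n : ℤ) := ⟨A' ^ 2 + B' ^ 2 + C' ^ 2, by exact_mod_cast h9n⟩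
          exact_mod_cast h
        obtain ⟨n', hn'⟩ := h9
        have hrep' : (n' : ℤ) = A' ^ 2 + B' ^ 2 + C' ^ 2 := by
          have h1 : (9 : ℤ) * (n' : ℤ) = 9 * (A' ^ 2 + B' ^ 2 + C' ^ 2) := by
            rw [← h9n, hn']; push_cast; ring
          linarith
        by_cases hsmall : n' = 1 ∨ n' = 2 ∨ n' = 3 ∨ n' = 14
        · rcases hsmall with h | h | h | h <;> subst h <;> subst hn'
          · exact ⟨7, 4, 4, by norm_num, by decide, by norm_num, by norm_num, by norm_num⟩
          · exact ⟨11, 5, 4, by norm_num, by decide, by norm_num, by norm_num, by norm_num⟩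
          · exact ⟨13, 7, 5, by norm_num, by decide, by norm_num, by norm_num, by norm_num⟩
          · exact ⟨25, 22, 5, by norm_num, by decide, by norm_num, by norm_num, by norm_num⟩
        · push_neg at hsmall
          obtain ⟨hs1, hs2, hs3, hs14⟩ := hsmall
          have hn'pos : 0 < n' := by
            rcases Nat.eq_zero_or_pos n' with h | h
            · omega
            · exact h
          have hlt : n' < n := by omega
          obtain ⟨u, v, w, hequ, hduvw, hu2, hv2, hw2⟩ :=
            IH n' hlt hn'pos ⟨A', B', C', hrep'⟩ hs1 hs2 hs3 hs14
          have hdu : ¬((3 : ℤ) ∣ u) := fun h => hduvw ((h.mul_right v).mul_right w)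
          have hdv : ¬((3 : ℤ) ∣ v) := fun h => hduvw ((h.mul_left u).mul_right w)
          have hdw : ¬((3 : ℤ) ∣ w) := fun h => hduvw (h.mul_left (u * v))
          have hu1 : u ≠ 1 := fun h => hu2 (by rw [h]; norm_num)
          have hu1' : u ≠ -1 := fun h => hu2 (by rw [h]; norm_num)
          have hv1 : v ≠ 1 := fun h => hv2 (by rw [h]; norm_num)
          have hv1' : v ≠ -1 := fun h => hv2 (by rw [h]; norm_num)
          have hw1 : w ≠ 1 := fun h => hw2 (by rw [h]; norm_num)
          have hw1' : w ≠ -1 := fun h => hw2 (by rw [h]; norm_num)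
          have hu0 : u ≠ 0 := fun h => hdu (by rw [h]; exact dvd_zero 3)
          have hv0 : v ≠ 0 := fun h => hdv (by rw [h]; exact dvd_zero 3)
          have hw0 : w ≠ 0 := fun h => hdw (by rw [h]; exact dvd_zero 3)
          obtain ⟨U, V, W, hW0, hWV, hVU, hsum2, hPU, hPV, hPW⟩ :=
            sort3 (fun x => ¬((3 : ℤ) ∣ x) ∧ (x ≤ -2 ∨ 2 ≤ x))
              (fun x hx => ⟨fun h => hx.1 (dvd_neg.mp h), by rcases hx with ⟨-, h2⟩; omega⟩)
              u v w ⟨hdu, by omega⟩ ⟨hdv, by omega⟩ ⟨hdw, by omega⟩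
          obtain ⟨x, y, z, heq, hx3, hy3, hz3, hx1, hx1', hy1, hy1', hz1, hz1'⟩ :=
            core U V W hW0 hWV hVU (fun h => hPU.1 h.1)
              (by rcases hPW with ⟨-, h2⟩; omega) (by rcases hPW with ⟨-, h2⟩; omega)
              (by rcases hPW with ⟨-, h2⟩; omega) (by rcases hPW with ⟨-, h2⟩; omega)
          have hfin : x ^ 2 + y ^ 2 + z ^ 2 = (9 * n : ℤ) := by
            rw [heq, hsum2]
            have h81 : (9 * n : ℤ) = 9 * ((9 * n' : ℤ)) := by rw [hn']; push_cast; ring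
            rw [h81, hequ]
          exact ⟨x, y, z, pack hfin hx3 hy3 hz3 hx1 hx1' hy1 hy1' hz1 hz1'⟩
      · -- direct application of core
        have he1 : ¬(A = 1 ∧ B = 0 ∧ C = 0) := by
          rintro ⟨x1, x2, x3⟩; rw [x1, x2, x3] at hsum'; norm_num at hsum'; omega
        have he2 : ¬(A = 1 ∧ B = 1 ∧ C = 0) := by
          rintro ⟨x1, x2, x3⟩; rw [x1, x2, x3] at hsum'; norm_num at hsum'; omega
        have he3 : ¬(A = 1 ∧ B = 1 ∧ C = 1) := by
          rintro ⟨x1, x2, x3⟩; rw [x1, x2, x3] at hsum'; norm_num at hsum'; omega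
        have he4 : ¬(A = 3 ∧ B = 2 ∧ C = 1) := by
          rintro ⟨x1, x2, x3⟩; rw [x1, x2, x3] at hsum'; norm_num at hsum'; omega
        obtain ⟨x, y, z, heq, hx3, hy3, hz3, hx1, hx1', hy1, hy1', hz1, hz1'⟩ :=
          core A B C hC0 hCB hBA hall he1 he2 he3 he4
        have hfin : x ^ 2 + y ^ 2 + z ^ 2 = (9 * n : ℤ) := by
          rw [heq, ← hsum']
        exact ⟨x, y, z, pack hfin hx3 hy3 hz3 hx1 hx1' hy1 hy1' hz1 hz1'⟩
  simp only [Set.mem_insert_iff, Set.mem_singleton_iff, not_or] at hexc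
  exact key m hm hS3 hexc.1 hexc.2.1 hexc.2.2.1 hexc.2.2.2
end

section
/- For every integer k ≥ 4 and every positive integer n, n is a sum of k nonzero triangular numbers if and only if n ≥ k and n ≠ k + 1 and n ≠ k + 3. Equivalently: there exist positive integers x₁, …, x_k with n = Σᵢ xᵢ(xᵢ+1)/2 if and only if n ∉ {1, 2, …, k−1, k+1, k+3}. -/
set_option linter.unusedVariables false

def Good (n : ℕ) : Prop := ∃ a b c d : ℤ,
  (1 ≤ a ∨ a ≤ -2) ∧ (1 ≤ b ∨ b ≤ -2) ∧ (1 ≤ c ∨ c ≤ -2) ∧ (1 ≤ d ∨ d ≤ -2) ∧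
  a*(a+1) + b*(b+1) + c*(c+1) + d*(d+1) = 2*(n:ℤ)

lemma fcls00 (n : ℕ) (u v : ℤ) (h8 : 8 ≤ n) (hxy : 3*v+0 ≤ 3*u+0) (hv : (0:ℤ) ≤ 3*v+0)
    (hn : 2*(n:ℤ) = 2*((3*u+0)^2 + (3*u+0)*(3*v+0) + (3*v+0)^2)) : Good n := by
  by_cases h0 : (1 ≤ (-3)*u + (-1) ∨ (-3)*u + (-1) ≤ -2) ∧ (1 ≤ (-2)*u + (-3)*v ∨ (-2)*u + (-3)*v ≤ -2) ∧ (1 ≤ (-2)*u ∨ (-2)*u ≤ -2) ∧ (1 ≤ (-1)*u + (-3)*v + (-1) ∨ (-1)*u + (-3)*v + (-1) ≤ -2)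
  · exact ⟨(-3)*u + (-1), (-2)*u + (-3)*v, (-2)*u, (-1)*u + (-3)*v + (-1), h0.1, h0.2.1, h0.2.2.1, h0.2.2.2, by linear_combination -hn⟩
  have hex : (u = 0 ∧ v = 0) := by omega
  obtain ⟨rfl, rfl⟩ := hex
  norm_num at hn; omega

lemma fcls01 (n : ℕ) (u v : ℤ) (h8 : 8 ≤ n) (hxy : 3*v+1 ≤ 3*u+0) (hv : (0:ℤ) ≤ 3*v+1)
    (hn : 2*(n:ℤ) = 2*((3*u+0)^2 + (3*u+0)*(3*v+1) + (3*v+1)^2)) : Good n := by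
  by_cases h0 : (1 ≤ (-4)*u + (-2)*v + (-1) ∨ (-4)*u + (-2)*v + (-1) ≤ -2) ∧ (1 ≤ (-1)*u + (-2)*v + (-1) ∨ (-1)*u + (-2)*v + (-1) ≤ -2) ∧ (1 ≤ (-1)*u + v + (-1) ∨ (-1)*u + v + (-1) ≤ -2) ∧ (1 ≤ (-3)*v + (-2) ∨ (-3)*v + (-2) ≤ -2)
  · exact ⟨(-4)*u + (-2)*v + (-1), (-1)*u + (-2)*v + (-1), (-1)*u + v + (-1), (-3)*v + (-2), h0.1, h0.2.1, h0.2.2.1, h0.2.2.2, by linear_combination -hn⟩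
  exfalso; omega

lemma fcls02 (n : ℕ) (u v : ℤ) (h8 : 8 ≤ n) (hxy : 3*v+2 ≤ 3*u+0) (hv : (0:ℤ) ≤ 3*v+2)
    (hn : 2*(n:ℤ) = 2*((3*u+0)^2 + (3*u+0)*(3*v+2) + (3*v+2)^2)) : Good n := by
  by_cases h0 : (1 ≤ (-3)*u + (-1)*v + (-1) ∨ (-3)*u + (-1)*v + (-1) ≤ -2) ∧ (1 ≤ (-2)*u + (-1)*v + (-2) ∨ (-2)*u + (-1)*v + (-2) ≤ -2) ∧ (1 ≤ (-2)*u ∨ (-2)*u ≤ -2) ∧ (1 ≤ (-1)*u + (-4)*v + (-3) ∨ (-1)*u + (-4)*v + (-3) ≤ -2)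
  · exact ⟨(-3)*u + (-1)*v + (-1), (-2)*u + (-1)*v + (-2), (-2)*u, (-1)*u + (-4)*v + (-3), h0.1, h0.2.1, h0.2.2.1, h0.2.2.2, by linear_combination -hn⟩
  exfalso; omega

lemma fcls10 (n : ℕ) (u v : ℤ) (h8 : 8 ≤ n) (hxy : 3*v+0 ≤ 3*u+1) (hv : (0:ℤ) ≤ 3*v+0)
    (hn : 2*(n:ℤ) = 2*((3*u+1)^2 + (3*u+1)*(3*v+0) + (3*v+0)^2)) : Good n := by
  by_cases h0 : (1 ≤ (-3)*u + (-1)*v + (-1) ∨ (-3)*u + (-1)*v + (-1) ≤ -2) ∧ (1 ≤ (-2)*u + (-1)*v + (-1) ∨ (-2)*u + (-1)*v + (-1) ≤ -2) ∧ (1 ≤ (-2)*u + (-2) ∨ (-2)*u + (-2) ≤ -2) ∧ (1 ≤ (-1)*u + (-4)*v + (-1) ∨ (-1)*u + (-4)*v + (-1) ≤ -2)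
  · exact ⟨(-3)*u + (-1)*v + (-1), (-2)*u + (-1)*v + (-1), (-2)*u + (-2), (-1)*u + (-4)*v + (-1), h0.1, h0.2.1, h0.2.2.1, h0.2.2.2, by linear_combination -hn⟩
  have hex : (u = 0 ∧ v = 0) := by omega
  obtain ⟨rfl, rfl⟩ := hex
  norm_num at hn; omega

lemma fcls11 (n : ℕ) (u v : ℤ) (h8 : 8 ≤ n) (hxy : 3*v+1 ≤ 3*u+1) (hv : (0:ℤ) ≤ 3*v+1)
    (hn : 2*(n:ℤ) = 2*((3*u+1)^2 + (3*u+1)*(3*v+1) + (3*v+1)^2)) : Good n := by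
  by_cases h0 : (1 ≤ (-3)*u + (-1) ∨ (-3)*u + (-1) ≤ -2) ∧ (1 ≤ (-2)*u + (-3)*v + (-2) ∨ (-2)*u + (-3)*v + (-2) ≤ -2) ∧ (1 ≤ (-2)*u + (-2) ∨ (-2)*u + (-2) ≤ -2) ∧ (1 ≤ (-1)*u + (-3)*v + (-2) ∨ (-1)*u + (-3)*v + (-2) ≤ -2)
  · exact ⟨(-3)*u + (-1), (-2)*u + (-3)*v + (-2), (-2)*u + (-2), (-1)*u + (-3)*v + (-2), h0.1, h0.2.1, h0.2.2.1, h0.2.2.2, by linear_combination -hn⟩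
  have hex : (u = 0 ∧ v = 0) := by omega
  obtain ⟨rfl, rfl⟩ := hex
  norm_num at hn; omega

lemma fcls12 (n : ℕ) (u v : ℤ) (h8 : 8 ≤ n) (hxy : 3*v+2 ≤ 3*u+1) (hv : (0:ℤ) ≤ 3*v+2)
    (hn : 2*(n:ℤ) = 2*((3*u+1)^2 + (3*u+1)*(3*v+2) + (3*v+2)^2)) : Good n := by
  by_cases h0 : (1 ≤ (-4)*u + (-2)*v + (-3) ∨ (-4)*u + (-2)*v + (-3) ≤ -2) ∧ (1 ≤ (-1)*u + (-2)*v + (-2) ∨ (-1)*u + (-2)*v + (-2) ≤ -2) ∧ (1 ≤ (-1)*u + v + (-1) ∨ (-1)*u + v + (-1) ≤ -2) ∧ (1 ≤ (-3)*v + (-3) ∨ (-3)*v + (-3) ≤ -2)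
  · exact ⟨(-4)*u + (-2)*v + (-3), (-1)*u + (-2)*v + (-2), (-1)*u + v + (-1), (-3)*v + (-3), h0.1, h0.2.1, h0.2.2.1, h0.2.2.2, by linear_combination -hn⟩
  exfalso; omega

lemma fcls20 (n : ℕ) (u v : ℤ) (h8 : 8 ≤ n) (hxy : 3*v+0 ≤ 3*u+2) (hv : (0:ℤ) ≤ 3*v+0)
    (hn : 2*(n:ℤ) = 2*((3*u+2)^2 + (3*u+2)*(3*v+0) + (3*v+0)^2)) : Good n := by
  by_cases h0 : (1 ≤ (-3)*u + (-3)*v + (-2) ∨ (-3)*u + (-3)*v + (-2) ≤ -2) ∧ (1 ≤ (-2)*u + (-1)*v + (-2) ∨ (-2)*u + (-1)*v + (-2) ≤ -2) ∧ (1 ≤ (-2)*u + 2*v + (-2) ∨ (-2)*u + 2*v + (-2) ≤ -2) ∧ (1 ≤ (-1)*u + (-2)*v + (-2) ∨ (-1)*u + (-2)*v + (-2) ≤ -2)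
  · exact ⟨(-3)*u + (-3)*v + (-2), (-2)*u + (-1)*v + (-2), (-2)*u + 2*v + (-2), (-1)*u + (-2)*v + (-2), h0.1, h0.2.1, h0.2.2.1, h0.2.2.2, by linear_combination -hn⟩
  exfalso; omega

lemma fcls21 (n : ℕ) (u v : ℤ) (h8 : 8 ≤ n) (hxy : 3*v+1 ≤ 3*u+2) (hv : (0:ℤ) ≤ 3*v+1)
    (hn : 2*(n:ℤ) = 2*((3*u+2)^2 + (3*u+2)*(3*v+1) + (3*v+1)^2)) : Good n := by
  by_cases h0 : (1 ≤ (-3)*u + (-1)*v + (-3) ∨ (-3)*u + (-1)*v + (-3) ≤ -2) ∧ (1 ≤ (-2)*u + (-4)*v + (-3) ∨ (-2)*u + (-4)*v + (-3) ≤ -2) ∧ (1 ≤ (-2)*u + v + (-1) ∨ (-2)*u + v + (-1) ≤ -2) ∧ (1 ≤ (-1)*u + (-2) ∨ (-1)*u + (-2) ≤ -2)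
  · exact ⟨(-3)*u + (-1)*v + (-3), (-2)*u + (-4)*v + (-3), (-2)*u + v + (-1), (-1)*u + (-2), h0.1, h0.2.1, h0.2.2.1, h0.2.2.2, by linear_combination -hn⟩
  have hex : (u = 0 ∧ v = 0) := by omega
  obtain ⟨rfl, rfl⟩ := hex
  norm_num at hn; omega

lemma fcls22 (n : ℕ) (u v : ℤ) (h8 : 8 ≤ n) (hxy : 3*v+2 ≤ 3*u+2) (hv : (0:ℤ) ≤ 3*v+2)
    (hn : 2*(n:ℤ) = 2*((3*u+2)^2 + (3*u+2)*(3*v+2) + (3*v+2)^2)) : Good n := by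
  by_cases h0 : (1 ≤ (-3)*u + (-3) ∨ (-3)*u + (-3) ≤ -2) ∧ (1 ≤ (-2)*u + (-3)*v + (-4) ∨ (-2)*u + (-3)*v + (-4) ≤ -2) ∧ (1 ≤ (-2)*u + (-1) ∨ (-2)*u + (-1) ≤ -2) ∧ (1 ≤ (-1)*u + (-3)*v + (-3) ∨ (-1)*u + (-3)*v + (-3) ≤ -2)
  · exact ⟨(-3)*u + (-3), (-2)*u + (-3)*v + (-4), (-2)*u + (-1), (-1)*u + (-3)*v + (-3), h0.1, h0.2.1, h0.2.2.1, h0.2.2.2, by linear_combination -hn⟩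
  have hex : (u = 0 ∧ v = 0) := by omega
  obtain ⟨rfl, rfl⟩ := hex
  norm_num at hn
  exact ⟨2,2,2,2, Or.inl (by norm_num), Or.inl (by norm_num), Or.inl (by norm_num), Or.inl (by norm_num), by omega⟩

lemma gcls00 (n : ℕ) (u v : ℤ) (h8 : 8 ≤ n) (hxy : 3*v+0 ≤ 3*u+0) (hz : (1:ℤ) ≤ (3*u+0) + 2*(3*v+0))
    (hn : 2*(n:ℤ) = 2*((3*u+0)^2 + (3*u+0)*(3*v+0) + (3*v+0)^2 - (3*u+0) - (3*v+0))) : Good n := by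
  by_cases h0 : (1 ≤ (-3)*u + (-3)*v ∨ (-3)*u + (-3)*v ≤ -2) ∧ (1 ≤ (-2)*u + (-2)*v ∨ (-2)*u + (-2)*v ≤ -2) ∧ (1 ≤ (-2)*u + v ∨ (-2)*u + v ≤ -2) ∧ (1 ≤ (-1)*u + 2*v + (-1) ∨ (-1)*u + 2*v + (-1) ≤ -2)
  · exact ⟨(-3)*u + (-3)*v, (-2)*u + (-2)*v, (-2)*u + v, (-1)*u + 2*v + (-1), h0.1, h0.2.1, h0.2.2.1, h0.2.2.2, by linear_combination -hn⟩
  by_cases h1 : (1 ≤ (-3)*u ∨ (-3)*u ≤ -2) ∧ (1 ≤ (-2)*u + (-4)*v ∨ (-2)*u + (-4)*v ≤ -2) ∧ (1 ≤ (-2)*u + (-1)*v ∨ (-2)*u + (-1)*v ≤ -2) ∧ (1 ≤ (-1)*u + v + (-1) ∨ (-1)*u + v + (-1) ≤ -2)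
  · exact ⟨(-3)*u, (-2)*u + (-4)*v, (-2)*u + (-1)*v, (-1)*u + v + (-1), h1.1, h1.2.1, h1.2.2.1, h1.2.2.2, by linear_combination -hn⟩
  have hex : (u = 1 ∧ v = 1) := by omega
  obtain ⟨rfl, rfl⟩ := hex
  norm_num at hn
  exact ⟨2,3,3,3, Or.inl (by norm_num), Or.inl (by norm_num), Or.inl (by norm_num), Or.inl (by norm_num), by omega⟩

lemma gcls01 (n : ℕ) (u v : ℤ) (h8 : 8 ≤ n) (hxy : 3*v+1 ≤ 3*u+0) (hz : (1:ℤ) ≤ (3*u+0) + 2*(3*v+1))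
    (hn : 2*(n:ℤ) = 2*((3*u+0)^2 + (3*u+0)*(3*v+1) + (3*v+1)^2 - (3*u+0) - (3*v+1))) : Good n := by
  by_cases h0 : (1 ≤ (-3)*u + (-3)*v + (-1) ∨ (-3)*u + (-3)*v + (-1) ≤ -2) ∧ (1 ≤ (-2)*u + (-1)*v ∨ (-2)*u + (-1)*v ≤ -2) ∧ (1 ≤ (-2)*u + 2*v ∨ (-2)*u + 2*v ≤ -2) ∧ (1 ≤ (-1)*u + (-2)*v + (-1) ∨ (-1)*u + (-2)*v + (-1) ≤ -2)
  · exact ⟨(-3)*u + (-3)*v + (-1), (-2)*u + (-1)*v, (-2)*u + 2*v, (-1)*u + (-2)*v + (-1), h0.1, h0.2.1, h0.2.2.1, h0.2.2.2, by linear_combination -hn⟩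
  by_cases h1 : (1 ≤ (-3)*u + (-2)*v + (-1) ∨ (-3)*u + (-2)*v + (-1) ≤ -2) ∧ (1 ≤ (-3)*u + (-1)*v ∨ (-3)*u + (-1)*v ≤ -2) ∧ (1 ≤ (-3)*v + (-1) ∨ (-3)*v + (-1) ≤ -2) ∧ (1 ≤ (-2)*v + (-1) ∨ (-2)*v + (-1) ≤ -2)
  · exact ⟨(-3)*u + (-2)*v + (-1), (-3)*u + (-1)*v, (-3)*v + (-1), (-2)*v + (-1), h1.1, h1.2.1, h1.2.2.1, h1.2.2.2, by linear_combination -hn⟩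
  exfalso; omega

lemma gcls02 (n : ℕ) (u v : ℤ) (h8 : 8 ≤ n) (hxy : 3*v+2 ≤ 3*u+0) (hz : (1:ℤ) ≤ (3*u+0) + 2*(3*v+2))
    (hn : 2*(n:ℤ) = 2*((3*u+0)^2 + (3*u+0)*(3*v+2) + (3*v+2)^2 - (3*u+0) - (3*v+2))) : Good n := by
  by_cases h0 : (1 ≤ (-3)*u + (-2)*v + (-1) ∨ (-3)*u + (-2)*v + (-1) ≤ -2) ∧ (1 ≤ (-3)*u + (-1)*v + (-1) ∨ (-3)*u + (-1)*v + (-1) ≤ -2) ∧ (1 ≤ (-3)*v + (-2) ∨ (-3)*v + (-2) ≤ -2) ∧ (1 ≤ (-2)*v + (-2) ∨ (-2)*v + (-2) ≤ -2)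
  · exact ⟨(-3)*u + (-2)*v + (-1), (-3)*u + (-1)*v + (-1), (-3)*v + (-2), (-2)*v + (-2), h0.1, h0.2.1, h0.2.2.1, h0.2.2.2, by linear_combination -hn⟩
  by_cases h1 : (1 ≤ (-4)*u + (-2)*v + (-1) ∨ (-4)*u + (-2)*v + (-1) ≤ -2) ∧ (1 ≤ (-1)*u + (-2)*v + (-2) ∨ (-1)*u + (-2)*v + (-2) ≤ -2) ∧ (1 ≤ (-1)*u + v ∨ (-1)*u + v ≤ -2) ∧ (1 ≤ (-3)*v + (-2) ∨ (-3)*v + (-2) ≤ -2)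
  · exact ⟨(-4)*u + (-2)*v + (-1), (-1)*u + (-2)*v + (-2), (-1)*u + v, (-3)*v + (-2), h1.1, h1.2.1, h1.2.2.1, h1.2.2.2, by linear_combination -hn⟩
  have hex : (u = 1 ∧ v = -1) := by omega
  obtain ⟨rfl, rfl⟩ := hex
  norm_num at hn; omega

lemma gcls10 (n : ℕ) (u v : ℤ) (h8 : 8 ≤ n) (hxy : 3*v+0 ≤ 3*u+1) (hz : (1:ℤ) ≤ (3*u+1) + 2*(3*v+0))
    (hn : 2*(n:ℤ) = 2*((3*u+1)^2 + (3*u+1)*(3*v+0) + (3*v+0)^2 - (3*u+1) - (3*v+0))) : Good n := by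
  by_cases h0 : (1 ≤ (-3)*u + (-1) ∨ (-3)*u + (-1) ≤ -2) ∧ (1 ≤ (-2)*u + (-3)*v + (-1) ∨ (-2)*u + (-3)*v + (-1) ≤ -2) ∧ (1 ≤ (-2)*u + (-1) ∨ (-2)*u + (-1) ≤ -2) ∧ (1 ≤ (-1)*u + (-3)*v ∨ (-1)*u + (-3)*v ≤ -2)
  · exact ⟨(-3)*u + (-1), (-2)*u + (-3)*v + (-1), (-2)*u + (-1), (-1)*u + (-3)*v, h0.1, h0.2.1, h0.2.2.1, h0.2.2.2, by linear_combination -hn⟩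
  by_cases h1 : (1 ≤ (-4)*u + (-2)*v + (-1) ∨ (-4)*u + (-2)*v + (-1) ≤ -2) ∧ (1 ≤ (-1)*u + (-2)*v + (-1) ∨ (-1)*u + (-2)*v + (-1) ≤ -2) ∧ (1 ≤ (-1)*u + v + (-1) ∨ (-1)*u + v + (-1) ≤ -2) ∧ (1 ≤ (-3)*v ∨ (-3)*v ≤ -2)
  · exact ⟨(-4)*u + (-2)*v + (-1), (-1)*u + (-2)*v + (-1), (-1)*u + v + (-1), (-3)*v, h1.1, h1.2.1, h1.2.2.1, h1.2.2.2, by linear_combination -hn⟩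
  have hex : (u = 0 ∧ v = 0) ∨ (u = 1 ∧ v = 0) := by omega
  rcases hex with ⟨rfl, rfl⟩ | ⟨rfl, rfl⟩
  · norm_num at hn; omega
  · norm_num at hn
    exact ⟨2,2,2,2, Or.inl (by norm_num), Or.inl (by norm_num), Or.inl (by norm_num), Or.inl (by norm_num), by omega⟩

lemma gcls11 (n : ℕ) (u v : ℤ) (h8 : 8 ≤ n) (hxy : 3*v+1 ≤ 3*u+1) (hz : (1:ℤ) ≤ (3*u+1) + 2*(3*v+1))
    (hn : 2*(n:ℤ) = 2*((3*u+1)^2 + (3*u+1)*(3*v+1) + (3*v+1)^2 - (3*u+1) - (3*v+1))) : Good n := by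
  by_cases h0 : (1 ≤ (-3)*u + (-1)*v + (-1) ∨ (-3)*u + (-1)*v + (-1) ≤ -2) ∧ (1 ≤ (-2)*u + (-4)*v + (-2) ∨ (-2)*u + (-4)*v + (-2) ≤ -2) ∧ (1 ≤ (-2)*u + v + (-1) ∨ (-2)*u + v + (-1) ≤ -2) ∧ (1 ≤ (-1)*u + (-1) ∨ (-1)*u + (-1) ≤ -2)
  · exact ⟨(-3)*u + (-1)*v + (-1), (-2)*u + (-4)*v + (-2), (-2)*u + v + (-1), (-1)*u + (-1), h0.1, h0.2.1, h0.2.2.1, h0.2.2.2, by linear_combination -hn⟩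
  have hex : (u = 0 ∧ v = 0) := by omega
  obtain ⟨rfl, rfl⟩ := hex
  norm_num at hn; omega

lemma gcls12 (n : ℕ) (u v : ℤ) (h8 : 8 ≤ n) (hxy : 3*v+2 ≤ 3*u+1) (hz : (1:ℤ) ≤ (3*u+1) + 2*(3*v+2))
    (hn : 2*(n:ℤ) = 2*((3*u+1)^2 + (3*u+1)*(3*v+2) + (3*v+2)^2 - (3*u+1) - (3*v+2))) : Good n := by
  by_cases h0 : (1 ≤ (-3)*u + (-2)*v + (-2) ∨ (-3)*u + (-2)*v + (-2) ≤ -2) ∧ (1 ≤ (-2)*u + (-3)*v + (-3) ∨ (-2)*u + (-3)*v + (-3) ≤ -2) ∧ (1 ≤ (-2)*u + 2*v ∨ (-2)*u + 2*v ≤ -2) ∧ (1 ≤ (-1)*u + (-1)*v + (-1) ∨ (-1)*u + (-1)*v + (-1) ≤ -2)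
  · exact ⟨(-3)*u + (-2)*v + (-2), (-2)*u + (-3)*v + (-3), (-2)*u + 2*v, (-1)*u + (-1)*v + (-1), h0.1, h0.2.1, h0.2.2.1, h0.2.2.2, by linear_combination -hn⟩
  by_cases h1 : (1 ≤ (-3)*u + (-3)*v + (-3) ∨ (-3)*u + (-3)*v + (-3) ≤ -2) ∧ (1 ≤ (-2)*u + (-2)*v + (-2) ∨ (-2)*u + (-2)*v + (-2) ≤ -2) ∧ (1 ≤ (-2)*u + v ∨ (-2)*u + v ≤ -2) ∧ (1 ≤ (-1)*u + 2*v ∨ (-1)*u + 2*v ≤ -2)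
  · exact ⟨(-3)*u + (-3)*v + (-3), (-2)*u + (-2)*v + (-2), (-2)*u + v, (-1)*u + 2*v, h1.1, h1.2.1, h1.2.2.1, h1.2.2.2, by linear_combination -hn⟩
  exfalso; omega

lemma gcls20 (n : ℕ) (u v : ℤ) (h8 : 8 ≤ n) (hxy : 3*v+0 ≤ 3*u+2) (hz : (1:ℤ) ≤ (3*u+2) + 2*(3*v+0))
    (hn : 2*(n:ℤ) = 2*((3*u+2)^2 + (3*u+2)*(3*v+0) + (3*v+0)^2 - (3*u+2) - (3*v+0))) : Good n := by
  by_cases h0 : (1 ≤ (-3)*u + (-3)*v + (-2) ∨ (-3)*u + (-3)*v + (-2) ≤ -2) ∧ (1 ≤ (-2)*u + (-1)*v + (-1) ∨ (-2)*u + (-1)*v + (-1) ≤ -2) ∧ (1 ≤ (-2)*u + 2*v + (-2) ∨ (-2)*u + 2*v + (-2) ≤ -2) ∧ (1 ≤ (-1)*u + (-2)*v + (-1) ∨ (-1)*u + (-2)*v + (-1) ≤ -2)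
  · exact ⟨(-3)*u + (-3)*v + (-2), (-2)*u + (-1)*v + (-1), (-2)*u + 2*v + (-2), (-1)*u + (-2)*v + (-1), h0.1, h0.2.1, h0.2.2.1, h0.2.2.2, by linear_combination -hn⟩
  by_cases h1 : (1 ≤ (-3)*u + (-3)*v + (-2) ∨ (-3)*u + (-3)*v + (-2) ≤ -2) ∧ (1 ≤ (-2)*u + (-2)*v + (-1) ∨ (-2)*u + (-2)*v + (-1) ≤ -2) ∧ (1 ≤ (-2)*u + v + (-2) ∨ (-2)*u + v + (-2) ≤ -2) ∧ (1 ≤ (-1)*u + 2*v + (-1) ∨ (-1)*u + 2*v + (-1) ≤ -2)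
  · exact ⟨(-3)*u + (-3)*v + (-2), (-2)*u + (-2)*v + (-1), (-2)*u + v + (-2), (-1)*u + 2*v + (-1), h1.1, h1.2.1, h1.2.2.1, h1.2.2.2, by linear_combination -hn⟩
  have hex : (u = 0 ∧ v = 0) := by omega
  obtain ⟨rfl, rfl⟩ := hex
  norm_num at hn; omega

lemma gcls21 (n : ℕ) (u v : ℤ) (h8 : 8 ≤ n) (hxy : 3*v+1 ≤ 3*u+2) (hz : (1:ℤ) ≤ (3*u+2) + 2*(3*v+1))
    (hn : 2*(n:ℤ) = 2*((3*u+2)^2 + (3*u+2)*(3*v+1) + (3*v+1)^2 - (3*u+2) - (3*v+1))) : Good n := by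
  by_cases h0 : (1 ≤ (-3)*u + (-1)*v + (-2) ∨ (-3)*u + (-1)*v + (-2) ≤ -2) ∧ (1 ≤ (-2)*u + (-1)*v + (-2) ∨ (-2)*u + (-1)*v + (-2) ≤ -2) ∧ (1 ≤ (-2)*u + (-2) ∨ (-2)*u + (-2) ≤ -2) ∧ (1 ≤ (-1)*u + (-4)*v + (-2) ∨ (-1)*u + (-4)*v + (-2) ≤ -2)
  · exact ⟨(-3)*u + (-1)*v + (-2), (-2)*u + (-1)*v + (-2), (-2)*u + (-2), (-1)*u + (-4)*v + (-2), h0.1, h0.2.1, h0.2.2.1, h0.2.2.2, by linear_combination -hn⟩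
  by_cases h1 : (1 ≤ (-4)*u + (-2)*v + (-3) ∨ (-4)*u + (-2)*v + (-3) ≤ -2) ∧ (1 ≤ (-1)*u + (-2)*v + (-2) ∨ (-1)*u + (-2)*v + (-2) ≤ -2) ∧ (1 ≤ (-1)*u + v + (-1) ∨ (-1)*u + v + (-1) ≤ -2) ∧ (1 ≤ (-3)*v + (-1) ∨ (-3)*v + (-1) ≤ -2)
  · exact ⟨(-4)*u + (-2)*v + (-3), (-1)*u + (-2)*v + (-2), (-1)*u + v + (-1), (-3)*v + (-1), h1.1, h1.2.1, h1.2.2.1, h1.2.2.2, by linear_combination -hn⟩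
  exfalso; omega

lemma gcls22 (n : ℕ) (u v : ℤ) (h8 : 8 ≤ n) (hxy : 3*v+2 ≤ 3*u+2) (hz : (1:ℤ) ≤ (3*u+2) + 2*(3*v+2))
    (hn : 2*(n:ℤ) = 2*((3*u+2)^2 + (3*u+2)*(3*v+2) + (3*v+2)^2 - (3*u+2) - (3*v+2))) : Good n := by
  by_cases h0 : (1 ≤ (-3)*u + (-2) ∨ (-3)*u + (-2) ≤ -2) ∧ (1 ≤ (-2)*u + (-3)*v + (-3) ∨ (-2)*u + (-3)*v + (-3) ≤ -2) ∧ (1 ≤ (-2)*u + (-2) ∨ (-2)*u + (-2) ≤ -2) ∧ (1 ≤ (-1)*u + (-3)*v + (-3) ∨ (-1)*u + (-3)*v + (-3) ≤ -2)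
  · exact ⟨(-3)*u + (-2), (-2)*u + (-3)*v + (-3), (-2)*u + (-2), (-1)*u + (-3)*v + (-3), h0.1, h0.2.1, h0.2.2.1, h0.2.2.2, by linear_combination -hn⟩
  by_cases h1 : (1 ≤ (-3)*u + (-2) ∨ (-3)*u + (-2) ≤ -2) ∧ (1 ≤ (-2)*u + (-4)*v + (-4) ∨ (-2)*u + (-4)*v + (-4) ≤ -2) ∧ (1 ≤ (-2)*u + (-1)*v + (-2) ∨ (-2)*u + (-1)*v + (-2) ≤ -2) ∧ (1 ≤ (-1)*u + v + (-1) ∨ (-1)*u + v + (-1) ≤ -2)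
  · exact ⟨(-3)*u + (-2), (-2)*u + (-4)*v + (-4), (-2)*u + (-1)*v + (-2), (-1)*u + v + (-1), h1.1, h1.2.1, h1.2.2.1, h1.2.2.2, by linear_combination -hn⟩
  exfalso; omega


lemma normF (x y : ℤ) : ∃ X Y : ℤ, Y ≤ X ∧ 0 ≤ Y ∧ X^2+X*Y+Y^2 = x^2+x*y+y^2 := by
  rcases le_total 0 x with hx|hx <;> rcases le_total 0 y with hy|hy
  · rcases le_total y x with h|h
    · exact ⟨x, y, h, hy, by ring⟩
    · exact ⟨y, x, h, hx, by ring⟩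
  · rcases le_total 0 (x+y) with h|h
    · rcases le_total (-y) (x+y) with h2|h2
      · exact ⟨x+y, -y, h2, by linarith, by ring⟩
      · exact ⟨-y, x+y, h2, h, by ring⟩
    · rcases le_total x (-x-y) with h2|h2
      · exact ⟨-x-y, x, h2, hx, by ring⟩
      · exact ⟨x, -x-y, h2, by linarith, by ring⟩
  · rcases le_total 0 (x+y) with h|h
    · rcases le_total (-x) (x+y) with h2|h2
      · exact ⟨x+y, -x, h2, by linarith, by ring⟩
      · exact ⟨-x, x+y, h2, h, by ring⟩
    · rcases le_total y (-x-y) with h2|h2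
      · exact ⟨-x-y, y, h2, hy, by ring⟩
      · exact ⟨y, -x-y, h2, by linarith, by ring⟩
  · rcases le_total (-y) (-x) with h|h
    · exact ⟨-x, -y, h, by linarith, by ring⟩
    · exact ⟨-y, -x, h, by linarith, by ring⟩

lemma normG (x y : ℤ) : ∃ X Y : ℤ, Y ≤ X ∧ 1 ≤ X + 2*Y ∧
    X^2+X*Y+Y^2-X-Y = x^2+x*y+y^2-x-y := by
  rcases le_total x y with h1|h1 <;> rcases le_total x (1-x-y) with h2|h2 <;>
    rcases le_total y (1-x-y) with h3|h3
  · exact ⟨1-x-y, y, h3, by linarith, by ring⟩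
  · exact ⟨y, 1-x-y, h3, by linarith, by ring⟩
  · exact ⟨1-x-y, y, h3, by linarith, by ring⟩
  · exact ⟨y, x, h1, by linarith, by ring⟩
  · exact ⟨1-x-y, x, h2, by linarith, by ring⟩
  · exact ⟨x, y, h1, by linarith, by ring⟩
  · exact ⟨x, 1-x-y, h2, by linarith, by ring⟩
  · exact ⟨x, y, h1, by linarith, by ring⟩

lemma GoodF (n : ℕ) (h8 : 8 ≤ n) (x y : ℤ) (hn : 2*(n:ℤ) = 2*(x^2+x*y+y^2)) : Good n := by
  obtain ⟨X, Y, hXY, hY, hf⟩ := normF x y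
  have hn' : 2*(n:ℤ) = 2*(X^2+X*Y+Y^2) := by linear_combination hn - 2*hf
  clear hn hf
  have h3x : X % 3 = 0 ∨ X % 3 = 1 ∨ X % 3 = 2 := by omega
  have h3y : Y % 3 = 0 ∨ Y % 3 = 1 ∨ Y % 3 = 2 := by omega
  rcases h3x with h|h|h <;> rcases h3y with h'|h'|h'
  · obtain ⟨u, rfl⟩ : ∃ u, X = 3*u + 0 := ⟨(X-0)/3, by omega⟩
    obtain ⟨v, rfl⟩ : ∃ v, Y = 3*v + 0 := ⟨(Y-0)/3, by omega⟩
    exact fcls00 n u v h8 (by omega) (by omega) (by linear_combination hn')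
  · obtain ⟨u, rfl⟩ : ∃ u, X = 3*u + 0 := ⟨(X-0)/3, by omega⟩
    obtain ⟨v, rfl⟩ : ∃ v, Y = 3*v + 1 := ⟨(Y-1)/3, by omega⟩
    exact fcls01 n u v h8 (by omega) (by omega) (by linear_combination hn')
  · obtain ⟨u, rfl⟩ : ∃ u, X = 3*u + 0 := ⟨(X-0)/3, by omega⟩
    obtain ⟨v, rfl⟩ : ∃ v, Y = 3*v + 2 := ⟨(Y-2)/3, by omega⟩
    exact fcls02 n u v h8 (by omega) (by omega) (by linear_combination hn')
  · obtain ⟨u, rfl⟩ : ∃ u, X = 3*u + 1 := ⟨(X-1)/3, by omega⟩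
    obtain ⟨v, rfl⟩ : ∃ v, Y = 3*v + 0 := ⟨(Y-0)/3, by omega⟩
    exact fcls10 n u v h8 (by omega) (by omega) (by linear_combination hn')
  · obtain ⟨u, rfl⟩ : ∃ u, X = 3*u + 1 := ⟨(X-1)/3, by omega⟩
    obtain ⟨v, rfl⟩ : ∃ v, Y = 3*v + 1 := ⟨(Y-1)/3, by omega⟩
    exact fcls11 n u v h8 (by omega) (by omega) (by linear_combination hn')
  · obtain ⟨u, rfl⟩ : ∃ u, X = 3*u + 1 := ⟨(X-1)/3, by omega⟩
    obtain ⟨v, rfl⟩ : ∃ v, Y = 3*v + 2 := ⟨(Y-2)/3, by omega⟩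
    exact fcls12 n u v h8 (by omega) (by omega) (by linear_combination hn')
  · obtain ⟨u, rfl⟩ : ∃ u, X = 3*u + 2 := ⟨(X-2)/3, by omega⟩
    obtain ⟨v, rfl⟩ : ∃ v, Y = 3*v + 0 := ⟨(Y-0)/3, by omega⟩
    exact fcls20 n u v h8 (by omega) (by omega) (by linear_combination hn')
  · obtain ⟨u, rfl⟩ : ∃ u, X = 3*u + 2 := ⟨(X-2)/3, by omega⟩
    obtain ⟨v, rfl⟩ : ∃ v, Y = 3*v + 1 := ⟨(Y-1)/3, by omega⟩
    exact fcls21 n u v h8 (by omega) (by omega) (by linear_combination hn')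
  · obtain ⟨u, rfl⟩ : ∃ u, X = 3*u + 2 := ⟨(X-2)/3, by omega⟩
    obtain ⟨v, rfl⟩ : ∃ v, Y = 3*v + 2 := ⟨(Y-2)/3, by omega⟩
    exact fcls22 n u v h8 (by omega) (by omega) (by linear_combination hn')

lemma GoodG (n : ℕ) (h8 : 8 ≤ n) (x y : ℤ) (hn : 2*(n:ℤ) = 2*(x^2+x*y+y^2-x-y)) : Good n := by
  obtain ⟨X, Y, hXY, hY, hf⟩ := normG x y
  have hn' : 2*(n:ℤ) = 2*(X^2+X*Y+Y^2-X-Y) := by linear_combination hn - 2*hf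
  clear hn hf
  have h3x : X % 3 = 0 ∨ X % 3 = 1 ∨ X % 3 = 2 := by omega
  have h3y : Y % 3 = 0 ∨ Y % 3 = 1 ∨ Y % 3 = 2 := by omega
  rcases h3x with h|h|h <;> rcases h3y with h'|h'|h'
  · obtain ⟨u, rfl⟩ : ∃ u, X = 3*u + 0 := ⟨(X-0)/3, by omega⟩
    obtain ⟨v, rfl⟩ : ∃ v, Y = 3*v + 0 := ⟨(Y-0)/3, by omega⟩
    exact gcls00 n u v h8 (by omega) (by omega) (by linear_combination hn')
  · obtain ⟨u, rfl⟩ : ∃ u, X = 3*u + 0 := ⟨(X-0)/3, by omega⟩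
    obtain ⟨v, rfl⟩ : ∃ v, Y = 3*v + 1 := ⟨(Y-1)/3, by omega⟩
    exact gcls01 n u v h8 (by omega) (by omega) (by linear_combination hn')
  · obtain ⟨u, rfl⟩ : ∃ u, X = 3*u + 0 := ⟨(X-0)/3, by omega⟩
    obtain ⟨v, rfl⟩ : ∃ v, Y = 3*v + 2 := ⟨(Y-2)/3, by omega⟩
    exact gcls02 n u v h8 (by omega) (by omega) (by linear_combination hn')
  · obtain ⟨u, rfl⟩ : ∃ u, X = 3*u + 1 := ⟨(X-1)/3, by omega⟩
    obtain ⟨v, rfl⟩ : ∃ v, Y = 3*v + 0 := ⟨(Y-0)/3, by omega⟩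
    exact gcls10 n u v h8 (by omega) (by omega) (by linear_combination hn')
  · obtain ⟨u, rfl⟩ : ∃ u, X = 3*u + 1 := ⟨(X-1)/3, by omega⟩
    obtain ⟨v, rfl⟩ : ∃ v, Y = 3*v + 1 := ⟨(Y-1)/3, by omega⟩
    exact gcls11 n u v h8 (by omega) (by omega) (by linear_combination hn')
  · obtain ⟨u, rfl⟩ : ∃ u, X = 3*u + 1 := ⟨(X-1)/3, by omega⟩
    obtain ⟨v, rfl⟩ : ∃ v, Y = 3*v + 2 := ⟨(Y-2)/3, by omega⟩
    exact gcls12 n u v h8 (by omega) (by omega) (by linear_combination hn')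
  · obtain ⟨u, rfl⟩ : ∃ u, X = 3*u + 2 := ⟨(X-2)/3, by omega⟩
    obtain ⟨v, rfl⟩ : ∃ v, Y = 3*v + 0 := ⟨(Y-0)/3, by omega⟩
    exact gcls20 n u v h8 (by omega) (by omega) (by linear_combination hn')
  · obtain ⟨u, rfl⟩ : ∃ u, X = 3*u + 2 := ⟨(X-2)/3, by omega⟩
    obtain ⟨v, rfl⟩ : ∃ v, Y = 3*v + 1 := ⟨(Y-1)/3, by omega⟩
    exact gcls21 n u v h8 (by omega) (by omega) (by linear_combination hn')
  · obtain ⟨u, rfl⟩ : ∃ u, X = 3*u + 2 := ⟨(X-2)/3, by omega⟩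
    obtain ⟨v, rfl⟩ : ∃ v, Y = 3*v + 2 := ⟨(Y-2)/3, by omega⟩
    exact gcls22 n u v h8 (by omega) (by omega) (by linear_combination hn')

lemma finish64 (n : ℕ) (h8 : 8 ≤ n) (P Q R S : ℤ)
    (h : P^2+Q^2+R^2+S^2 = 2*(n:ℤ)+1) (hs : P+Q+R+S = 1) (hw : S = 0 ∨ S = 1) : Good n := by
  rcases hw with hS | hS
  · have hR : R = 1 - P - Q := by omega
    exact GoodG n h8 P Q (by linear_combination -h + (R+1-P-Q)*hR + S*hS)
  · have hR : R = -P - Q := by omega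
    exact GoodF n h8 P Q (by linear_combination -h + (R-P-Q)*hR + (S+1)*hS)

lemma parity4 (n : ℕ) (A B C D : ℤ) (h1 : A^2+B^2+C^2+D^2 = 2*(n:ℤ)+1) :
    ∃ w : ℤ, A+B+C+D = 2*w+1 := by
  obtain ⟨k1, hk1⟩ := Int.even_mul_succ_self A
  obtain ⟨k2, hk2⟩ := Int.even_mul_succ_self B
  obtain ⟨k3, hk3⟩ := Int.even_mul_succ_self C
  obtain ⟨k4, hk4⟩ := Int.even_mul_succ_self D
  exact ⟨k1+k2+k3+k4-n-1, by linear_combination hk1+hk2+hk3+hk4 - h1⟩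

lemma main4 (n : ℕ) (h8 : 8 ≤ n) : Good n := by
  obtain ⟨a, b, c, d, habcd⟩ := Nat.sum_four_squares (2*n+1)
  obtain ⟨A, B, C, D, h1⟩ : ∃ A B C D : ℤ, A^2+B^2+C^2+D^2 = 2*(n:ℤ)+1 :=
    ⟨a, b, c, d, by exact_mod_cast habcd⟩
  obtain ⟨w, hw⟩ := parity4 n A B C D h1
  rcases (by omega :
      ((1 ≤ w ∨ w ≤ -2) ∧ (1 ≤ w-C-D ∨ w-C-D ≤ -2) ∧ (1 ≤ w-B-D ∨ w-B-D ≤ -2) ∧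
        (1 ≤ w-B-C ∨ w-B-C ≤ -2)) ∨
      (w = 0 ∨ w = -1 ∨ w-C-D = 0 ∨ w-C-D = -1 ∨ w-B-D = 0 ∨ w-B-D = -1 ∨ w-B-C = 0 ∨
        w-B-C = -1)) with ⟨g1,g2,g3,g4⟩ | hEbad
  · exact ⟨w, w-C-D, w-B-D, w-B-C, g1, g2, g3, g4,
      by linear_combination h1 - (2*w+1-B-C-D+A)*hw⟩
  rcases (by omega :
      ((1 ≤ w-D ∨ w-D ≤ -2) ∧ (1 ≤ w-C ∨ w-C ≤ -2) ∧ (1 ≤ w-B ∨ w-B ≤ -2) ∧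
        (1 ≤ w-A ∨ w-A ≤ -2)) ∨
      (w-D = 0 ∨ w-D = -1 ∨ w-C = 0 ∨ w-C = -1 ∨ w-B = 0 ∨ w-B = -1 ∨ w-A = 0 ∨
        w-A = -1)) with ⟨o1,o2,o3,o4⟩ | hObad
  · exact ⟨w-D, w-C, w-B, w-A, o1, o2, o3, o4, by linear_combination h1 - (2*w+1)*hw⟩
  rcases hEbad with h|h|h|h|h|h|h|h <;> rcases hObad with h'|h'|h'|h'|h'|h'|h'|h'
  · exact finish64 n h8 (A) (B) (C) (D) (by linear_combination h1) (by omega) (by omega)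
  · exact finish64 n h8 (A) (B) (C) (D) (by linear_combination h1) (by omega) (by omega)
  · exact finish64 n h8 (A) (B) (D) (C) (by linear_combination h1) (by omega) (by omega)
  · exact finish64 n h8 (A) (B) (D) (C) (by linear_combination h1) (by omega) (by omega)
  · exact finish64 n h8 (A) (C) (D) (B) (by linear_combination h1) (by omega) (by omega)
  · exact finish64 n h8 (A) (C) (D) (B) (by linear_combination h1) (by omega) (by omega)
  · exact finish64 n h8 (B) (C) (D) (A) (by linear_combination h1) (by omega) (by omega)
  · exact finish64 n h8 (B) (C) (D) (A) (by linear_combination h1) (by omega) (by omega)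
  · exact finish64 n h8 (-A) (-B) (-C) (-D) (by linear_combination h1) (by omega) (by omega)
  · exact finish64 n h8 (-A) (-B) (-C) (-D) (by linear_combination h1) (by omega) (by omega)
  · exact finish64 n h8 (-A) (-B) (-D) (-C) (by linear_combination h1) (by omega) (by omega)
  · exact finish64 n h8 (-A) (-B) (-D) (-C) (by linear_combination h1) (by omega) (by omega)
  · exact finish64 n h8 (-A) (-C) (-D) (-B) (by linear_combination h1) (by omega) (by omega)
  · exact finish64 n h8 (-A) (-C) (-D) (-B) (by linear_combination h1) (by omega) (by omega)
  · exact finish64 n h8 (-B) (-C) (-D) (-A) (by linear_combination h1) (by omega) (by omega)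
  · exact finish64 n h8 (-B) (-C) (-D) (-A) (by linear_combination h1) (by omega) (by omega)
  · exact finish64 n h8 (A) (B) (-D) (-C) (by linear_combination h1) (by omega) (by omega)
  · exact finish64 n h8 (A) (B) (-D) (-C) (by linear_combination h1) (by omega) (by omega)
  · exact finish64 n h8 (A) (B) (-C) (-D) (by linear_combination h1) (by omega) (by omega)
  · exact finish64 n h8 (A) (B) (-C) (-D) (by linear_combination h1) (by omega) (by omega)
  · exact finish64 n h8 (B) (-C) (-D) (A) (by linear_combination h1) (by omega) (by omega)
  · exact finish64 n h8 (B) (-C) (-D) (A) (by linear_combination h1) (by omega) (by omega)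
  · exact finish64 n h8 (A) (-C) (-D) (B) (by linear_combination h1) (by omega) (by omega)
  · exact finish64 n h8 (A) (-C) (-D) (B) (by linear_combination h1) (by omega) (by omega)
  · exact finish64 n h8 (-A) (-B) (D) (C) (by linear_combination h1) (by omega) (by omega)
  · exact finish64 n h8 (-A) (-B) (D) (C) (by linear_combination h1) (by omega) (by omega)
  · exact finish64 n h8 (-A) (-B) (C) (D) (by linear_combination h1) (by omega) (by omega)
  · exact finish64 n h8 (-A) (-B) (C) (D) (by linear_combination h1) (by omega) (by omega)
  · exact finish64 n h8 (-B) (C) (D) (-A) (by linear_combination h1) (by omega) (by omega)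
  · exact finish64 n h8 (-B) (C) (D) (-A) (by linear_combination h1) (by omega) (by omega)
  · exact finish64 n h8 (-A) (C) (D) (-B) (by linear_combination h1) (by omega) (by omega)
  · exact finish64 n h8 (-A) (C) (D) (-B) (by linear_combination h1) (by omega) (by omega)
  · exact finish64 n h8 (A) (C) (-D) (-B) (by linear_combination h1) (by omega) (by omega)
  · exact finish64 n h8 (A) (C) (-D) (-B) (by linear_combination h1) (by omega) (by omega)
  · exact finish64 n h8 (-B) (C) (-D) (A) (by linear_combination h1) (by omega) (by omega)
  · exact finish64 n h8 (-B) (C) (-D) (A) (by linear_combination h1) (by omega) (by omega)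
  · exact finish64 n h8 (A) (-B) (C) (-D) (by linear_combination h1) (by omega) (by omega)
  · exact finish64 n h8 (A) (-B) (C) (-D) (by linear_combination h1) (by omega) (by omega)
  · exact finish64 n h8 (A) (-B) (-D) (C) (by linear_combination h1) (by omega) (by omega)
  · exact finish64 n h8 (A) (-B) (-D) (C) (by linear_combination h1) (by omega) (by omega)
  · exact finish64 n h8 (-A) (-C) (D) (B) (by linear_combination h1) (by omega) (by omega)
  · exact finish64 n h8 (-A) (-C) (D) (B) (by linear_combination h1) (by omega) (by omega)
  · exact finish64 n h8 (B) (-C) (D) (-A) (by linear_combination h1) (by omega) (by omega)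
  · exact finish64 n h8 (B) (-C) (D) (-A) (by linear_combination h1) (by omega) (by omega)
  · exact finish64 n h8 (-A) (B) (-C) (D) (by linear_combination h1) (by omega) (by omega)
  · exact finish64 n h8 (-A) (B) (-C) (D) (by linear_combination h1) (by omega) (by omega)
  · exact finish64 n h8 (-A) (B) (D) (-C) (by linear_combination h1) (by omega) (by omega)
  · exact finish64 n h8 (-A) (B) (D) (-C) (by linear_combination h1) (by omega) (by omega)
  · exact finish64 n h8 (-B) (-C) (D) (A) (by linear_combination h1) (by omega) (by omega)
  · exact finish64 n h8 (-B) (-C) (D) (A) (by linear_combination h1) (by omega) (by omega)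
  · exact finish64 n h8 (A) (-C) (D) (-B) (by linear_combination h1) (by omega) (by omega)
  · exact finish64 n h8 (A) (-C) (D) (-B) (by linear_combination h1) (by omega) (by omega)
  · exact finish64 n h8 (A) (-B) (D) (-C) (by linear_combination h1) (by omega) (by omega)
  · exact finish64 n h8 (A) (-B) (D) (-C) (by linear_combination h1) (by omega) (by omega)
  · exact finish64 n h8 (A) (-B) (-C) (D) (by linear_combination h1) (by omega) (by omega)
  · exact finish64 n h8 (A) (-B) (-C) (D) (by linear_combination h1) (by omega) (by omega)
  · exact finish64 n h8 (B) (C) (-D) (-A) (by linear_combination h1) (by omega) (by omega)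
  · exact finish64 n h8 (B) (C) (-D) (-A) (by linear_combination h1) (by omega) (by omega)
  · exact finish64 n h8 (-A) (C) (-D) (B) (by linear_combination h1) (by omega) (by omega)
  · exact finish64 n h8 (-A) (C) (-D) (B) (by linear_combination h1) (by omega) (by omega)
  · exact finish64 n h8 (-A) (B) (-D) (C) (by linear_combination h1) (by omega) (by omega)
  · exact finish64 n h8 (-A) (B) (-D) (C) (by linear_combination h1) (by omega) (by omega)
  · exact finish64 n h8 (-A) (B) (C) (-D) (by linear_combination h1) (by omega) (by omega)
  · exact finish64 n h8 (-A) (B) (C) (-D) (by linear_combination h1) (by omega) (by omega)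

lemma good_rep (n : ℕ) (h : Good n) :
    ∃ x : Fin 4 → ℕ, (∀ i, 0 < x i) ∧ n = ∑ i, x i * (x i + 1) / 2 := by
  obtain ⟨a, b, c, d, ha, hb, hc, hd, hsum⟩ := h
  have key : ∀ e : ℤ, (1 ≤ e ∨ e ≤ -2) → ∃ m : ℕ, 0 < m ∧ (m:ℤ)*((m:ℤ)+1) = e*(e+1) := by
    intro e he
    rcases he with he | he
    · refine ⟨e.toNat, by omega, ?_⟩
      have h0 : ((e.toNat : ℤ)) = e := Int.toNat_of_nonneg (by omega)
      rw [h0]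
    · refine ⟨(-1-e).toNat, by omega, ?_⟩
      have h0 : (((-1-e).toNat : ℤ)) = -1-e := Int.toNat_of_nonneg (by omega)
      rw [h0]; ring
  obtain ⟨m1, hm1, e1⟩ := key a ha
  obtain ⟨m2, hm2, e2⟩ := key b hb
  obtain ⟨m3, hm3, e3⟩ := key c hc
  obtain ⟨m4, hm4, e4⟩ := key d hd
  have hsnat : m1*(m1+1) + m2*(m2+1) + m3*(m3+1) + m4*(m4+1) = 2*n := by
    have hz : ((m1*(m1+1) + m2*(m2+1) + m3*(m3+1) + m4*(m4+1) : ℕ) : ℤ) = ((2*n : ℕ) : ℤ) := by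
      push_cast
      linear_combination e1+e2+e3+e4+hsum
    exact_mod_cast hz
  have d1 : 2 ∣ m1*(m1+1) := (Nat.even_mul_succ_self m1).two_dvd
  have d2 : 2 ∣ m2*(m2+1) := (Nat.even_mul_succ_self m2).two_dvd
  have d3 : 2 ∣ m3*(m3+1) := (Nat.even_mul_succ_self m3).two_dvd
  have d4 : 2 ∣ m4*(m4+1) := (Nat.even_mul_succ_self m4).two_dvd
  refine ⟨![m1, m2, m3, m4], ?_, ?_⟩
  · intro i
    fin_cases i
    · simpa using hm1
    · simpa using hm2
    · simpa using hm3
    · simpa using hm4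
  · rw [Fin.sum_univ_four]
    simp only [Matrix.cons_val_zero, Matrix.cons_val_one, Matrix.head_cons,
      Matrix.cons_val_two, Matrix.tail_cons, Matrix.cons_val_three, Matrix.head_fin_const]
    omega

lemma k4 (n : ℕ) (h4 : 4 ≤ n) (h5 : n ≠ 5) (h7 : n ≠ 7) :
    ∃ x : Fin 4 → ℕ, (∀ i, 0 < x i) ∧ n = ∑ i, x i * (x i + 1) / 2 := by
  rcases (by omega : n = 4 ∨ n = 6 ∨ 8 ≤ n) with rfl | rfl | h8
  · exact ⟨![1,1,1,1], by decide, by decide⟩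
  · exact ⟨![2,1,1,1], by decide, by decide⟩
  · exact good_rep n (main4 n h8)

lemma backward (k : ℕ) (hk : 4 ≤ k) : ∀ n : ℕ, k ≤ n → n ≠ k+1 → n ≠ k+3 →
    ∃ x : Fin k → ℕ, (∀ i, 0 < x i) ∧ n = ∑ i, x i * (x i + 1) / 2 := by
  induction k, hk using Nat.le_induction with
  | base => exact fun n h1 h2 h3 => k4 n h1 h2 h3
  | succ k hk ih =>
    intro n h1 h2 h3
    obtain ⟨x, hx, hsum⟩ := ih (n-1) (by omega) (by omega) (by omega)
    refine ⟨Fin.cons 1 x, ?_, ?_⟩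
    · intro i
      refine Fin.cases ?_ ?_ i
      · norm_num
      · intro j; simpa using hx j
    · rw [Fin.sum_univ_succ]
      simp only [Fin.cons_zero, Fin.cons_succ]
      omega

lemma tri_cases (m : ℕ) (hm : 0 < m) : m*(m+1)/2 = 1 ∨ m*(m+1)/2 = 3 ∨ 6 ≤ m*(m+1)/2 := by
  rcases (by omega : m = 1 ∨ m = 2 ∨ 3 ≤ m) with rfl | rfl | h3
  · norm_num
  · norm_num
  · right; right
    have h12 : 3*(3+1) ≤ m*(m+1) := Nat.mul_le_mul h3 (by omega)
    obtain ⟨t, ht⟩ : ∃ t, m*(m+1) = t := ⟨_, rfl⟩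
    rw [ht] at h12 ⊢
    omega

lemma forward : ∀ (k : ℕ) (n : ℕ) (x : Fin k → ℕ), (∀ i, 0 < x i) →
    n = ∑ i, x i * (x i + 1) / 2 → k ≤ n ∧ n ≠ k+1 ∧ n ≠ k+3 := by
  intro k
  induction k with
  | zero =>
    intro n x _ h
    simp at h
    omega
  | succ k ih =>
    intro n x hx hsum
    rw [Fin.sum_univ_succ] at hsum
    obtain ⟨h1, h2, h3⟩ := ih (∑ i : Fin k, x i.succ * (x i.succ + 1)/2)
      (fun i => x i.succ) (fun i => hx i.succ) rfl
    have ht := tri_cases (x 0) (hx 0)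
    set t := x 0 * (x 0 + 1) / 2 with hT
    set s := ∑ i : Fin k, x i.succ * (x i.succ + 1) / 2 with hS
    omega

/-- For `k ≥ 4`, a positive integer `n` is a sum of `k` nonzero triangular numbers iff
`n ≥ k`, `n ≠ k + 1`, and `n ≠ k + 3`. -/
theorem stmt_16 (k : ℕ) (hk : 4 ≤ k) (n : ℕ) (hn : 0 < n) :
    (∃ x : Fin k → ℕ, (∀ i, 0 < x i) ∧ n = ∑ i, x i * (x i + 1) / 2) ↔
    (k ≤ n ∧ n ≠ k + 1 ∧ n ≠ k + 3) := by
  constructor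
  · rintro ⟨x, hx, hsum⟩
    exact forward k n x hx hsum
  · rintro ⟨h1, h2, h3⟩
    exact backward k hk n h1 h2 h3
end
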